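/- arXiv:1905.12718 — 5 statements merged into one kernel-verified Lean document; each statement's English description precedes it below -/
import Mathlib

section
/- Fix α ∈ (0,1), ρ ∈ 𝒞 and P ∈ 𝒫^ρ. Then for every θ ∈ ℝ the denominator E[|ψ₋(Z−θ)|] is strictly positive, and the right-derivative O^ρ′_+(θ) of O^ρ at θ has the same sign as G^ρ(θ) − α: O^ρ′_+(θ) > 0 if and only if G^ρ(θ) > α, O^ρ′_+(θ) = 0 if and only if G^ρ(θ) = α, and O^ρ′_+(θ) < 0 if and only if G^ρ(θ) < α. -/
open MeasureTheory Set Filter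

noncomputable section

/-- The class `𝒞` of loss functions: convex, nonnegative, even, vanishing only at `0`. -/
def LossClass (ρ : ℝ → ℝ) : Prop :=
  ConvexOn ℝ Set.univ ρ ∧ (∀ t, 0 ≤ ρ t) ∧ (∀ t, ρ (-t) = ρ t) ∧ (∀ t, ρ t = 0 ↔ t = 0)

/-- `ψ` is the left-derivative of `ρ`. -/
def IsLeftDeriv (ρ ψ : ℝ → ℝ) : Prop :=
  ∀ x : ℝ, HasDerivWithinAt ρ (ψ x) (Set.Iio x) x

/-- The asymmetric loss `ρ_α(t) = ((1−α)·𝟙[t<0] + α·𝟙[t>0])·ρ(t)`. -/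
def rhoA (ρ : ℝ → ℝ) (α t : ℝ) : ℝ :=
  ((1 - α) * (if t < 0 then 1 else 0) + α * (if 0 < t then 1 else 0)) * ρ t

/-- The objective function `O^ρ(θ) = E[ρ_α(Z−θ) − ρ_α(Z)]`. -/
def Obj (ρ : ℝ → ℝ) (α : ℝ) (P : Measure ℝ) (θ : ℝ) : ℝ :=
  ∫ z, (rhoA ρ α (z - θ) - rhoA ρ α z) ∂P

/-- `G^ρ(θ) = E[|ψ₋(Z−θ)|·𝟙[Z ≤ θ]] / E[|ψ₋(Z−θ)|]`. -/
def Gfun (ψ : ℝ → ℝ) (P : Measure ℝ) (θ : ℝ) : ℝ :=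
  (∫ z, |ψ (z - θ)| * (if z ≤ θ then 1 else 0) ∂P) / ∫ z, |ψ (z - θ)| ∂P

/-- The order-`α` M-quantile `θ^ρ_α(P) = inf{θ : G^ρ(θ) ≥ α}`. -/
def MQuant (ψ : ℝ → ℝ) (P : Measure ℝ) (α : ℝ) : ℝ :=
  sInf {θ : ℝ | α ≤ Gfun ψ P θ}

/-! ### Auxiliary lemmas -/

private lemma aux_slope_bounds {f d : ℝ → ℝ} (hf : ConvexOn ℝ Set.univ f)
    (hd : ∀ x : ℝ, HasDerivWithinAt f (d x) (Set.Iio x) x) {u v : ℝ} (huv : u < v) :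
    d u ≤ (f v - f u) / (v - u) ∧ (f v - f u) / (v - u) ≤ d v := by
  constructor
  · have h1 : Tendsto (slope f u) (nhdsWithin u (Iio u)) (nhds (d u)) := by
      have := hasDerivWithinAt_iff_tendsto_slope.1 (hd u)
      rwa [Set.diff_singleton_eq_self (by simp)] at this
    refine le_of_tendsto h1 ?_
    filter_upwards [self_mem_nhdsWithin] with w hw
    have h2 := hf.secant_mono (Set.mem_univ u) (Set.mem_univ w) (Set.mem_univ v)
      (ne_of_lt hw) (ne_of_gt huv) (le_of_lt (lt_trans hw huv))
    rw [slope_def_field]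
    exact h2
  · have h2 : Tendsto (slope f v) (nhdsWithin v (Iio v)) (nhds (d v)) := by
      have := hasDerivWithinAt_iff_tendsto_slope.1 (hd v)
      rwa [Set.diff_singleton_eq_self (by simp)] at this
    refine ge_of_tendsto h2 ?_
    filter_upwards [Ioo_mem_nhdsLT_of_mem (show v ∈ Set.Ioc u v from ⟨huv, le_refl v⟩)] with w hw
    have h3 := hf.secant_mono (Set.mem_univ v) (Set.mem_univ u) (Set.mem_univ w)
      (ne_of_lt huv) (ne_of_lt hw.2) (le_of_lt hw.1)
    rw [slope_def_field]
    calc (f v - f u) / (v - u) = (f u - f v) / (u - v) := by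
            rw [show f u - f v = -(f v - f u) by ring, show u - v = -(v - u) by ring,
              neg_div_neg_eq]
    _ ≤ (f w - f v) / (w - v) := h3

private lemma rhoA_of_neg {ρ : ℝ → ℝ} {α t : ℝ} (ht : t < 0) : rhoA ρ α t = (1 - α) * ρ t := by
  rw [rhoA, if_pos ht, if_neg (by linarith)]; ring

private lemma rhoA_of_pos {ρ : ℝ → ℝ} {α t : ℝ} (ht : 0 < t) : rhoA ρ α t = α * ρ t := by
  rw [rhoA, if_neg (by linarith), if_pos ht]; ring

private lemma rhoA_zero' {ρ : ℝ → ℝ} {α : ℝ} : rhoA ρ α 0 = 0 := by norm_num [rhoA]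

private lemma rhoA_eq_maxmin {ρ : ℝ → ℝ} {α : ℝ} (hρ0 : ρ 0 = 0) (t : ℝ) :
    rhoA ρ α t = α * ρ (max t 0) + (1 - α) * ρ (min t 0) := by
  rcases lt_trichotomy t 0 with ht | ht | ht
  · rw [rhoA_of_neg ht, max_eq_right ht.le, min_eq_left ht.le, hρ0]; ring
  · subst ht; simp [rhoA_zero', hρ0]
  · rw [rhoA_of_pos ht, max_eq_left ht.le, min_eq_right ht.le, hρ0]; ring

private lemma rhoA_convex {ρ : ℝ → ℝ} {α : ℝ} (hα0 : 0 < α) (hα1 : α < 1)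
    (hconv : ConvexOn ℝ Set.univ ρ) (hρ0 : ρ 0 = 0) (hnn : ∀ t, 0 ≤ ρ t)
    (heven : ∀ t, ρ (-t) = ρ t) :
    ConvexOn ℝ Set.univ (rhoA ρ α) := by
  have hmono : MonotoneOn ρ (Ici 0) := by
    intro x hx y hy hxy
    rcases eq_or_lt_of_le hxy with rfl | hxy
    · exact le_refl _
    · rcases eq_or_lt_of_le (Set.mem_Ici.mp hx) with rfl | hx0
      · rw [hρ0]; exact hnn y
      · have h := hconv.secant_mono (Set.mem_univ x) (Set.mem_univ 0) (Set.mem_univ y)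
          (by linarith) (by linarith) (by linarith)
        have hL : (0:ℝ) ≤ (ρ 0 - ρ x) / (0 - x) := by
          rw [hρ0, show (0:ℝ) - ρ x = -(ρ x) by ring, show (0:ℝ) - x = -x by ring,
            neg_div_neg_eq]
          exact div_nonneg (hnn x) hx
        have h2 := hL.trans h
        have hyx : (0:ℝ) < y - x := by linarith
        have h3 : (0:ℝ) ≤ ρ y - ρ x := by
          by_contra hneg
          push_neg at hneg
          have : (ρ y - ρ x) / (y - x) < 0 := div_neg_of_neg_of_pos (by linarith) hyx
          linarith
        linarith
  have hg1 : ConvexOn ℝ Set.univ (fun t : ℝ => ρ (max t 0)) := by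
    have hcm : ConvexOn ℝ Set.univ (fun t : ℝ => max t 0) := by
      refine ⟨convex_univ, fun x _ y _ a b ha hb hab => ?_⟩
      simp only [smul_eq_mul]
      apply max_le
      · have h1 := mul_le_mul_of_nonneg_left (le_max_left x 0) ha
        have h2 := mul_le_mul_of_nonneg_left (le_max_left y 0) hb
        linarith
      · have h1 := mul_nonneg ha (le_max_right x 0)
        have h2 := mul_nonneg hb (le_max_right y 0)
        linarith
    have himg : (fun t : ℝ => max t 0) '' Set.univ = Ici 0 := by
      ext x
      simp only [Set.mem_image, Set.mem_univ, true_and, Set.mem_Ici]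
      constructor
      · rintro ⟨t, rfl⟩; exact le_max_right t 0
      · intro hx; exact ⟨x, max_eq_left hx⟩
    have hg : ConvexOn ℝ ((fun t : ℝ => max t 0) '' Set.univ) ρ := by
      rw [himg]; exact hconv.subset (subset_univ _) (convex_Ici 0)
    have hg' : MonotoneOn ρ ((fun t : ℝ => max t 0) '' Set.univ) := by
      rw [himg]; exact hmono
    exact hg.comp hcm hg'
  have hg2 : ConvexOn ℝ Set.univ (fun t : ℝ => ρ (min t 0)) := by
    have : ∀ t : ℝ, ρ (min t 0) = ρ (max (-t) 0) := by
      intro t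
      have hmm : max (-t) 0 = -(min t 0) := by
        rcases le_total t 0 with h | h
        · rw [min_eq_left h, max_eq_left (by linarith)]
        · rw [min_eq_right h, max_eq_right (by linarith), neg_zero]
      rw [hmm, heven]
    rw [show (fun t : ℝ => ρ (min t 0)) = (fun t : ℝ => ρ (max t 0)) ∘ (fun t : ℝ => -t) from
      funext fun t => this t]
    exact ⟨convex_univ, fun x _ y _ a b ha hb hab => by
      have h5 := hg1.2 (Set.mem_univ (-x)) (Set.mem_univ (-y)) ha hb hab
      simpa only [Function.comp_apply, smul_neg, neg_add] using h5⟩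
  have heq : rhoA ρ α = fun t => α * ρ (max t 0) + (1 - α) * ρ (min t 0) :=
    funext (rhoA_eq_maxmin hρ0)
  rw [heq]
  exact (hg1.smul hα0.le).add (hg2.smul (by linarith))

/-- the left derivative of `rhoA ρ α`. -/
private def psiA (ψ : ℝ → ℝ) (α t : ℝ) : ℝ := (if t ≤ 0 then (1 - α) else α) * ψ t

private lemma rhoA_leftDeriv {ρ ψ : ℝ → ℝ} {α : ℝ} (hρ0 : ρ 0 = 0)
    (hψ : ∀ x : ℝ, HasDerivWithinAt ρ (ψ x) (Set.Iio x) x) (t : ℝ) :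
    HasDerivWithinAt (rhoA ρ α) (psiA ψ α t) (Set.Iio t) t := by
  rcases lt_trichotomy t 0 with ht | ht | ht
  · have h := (hψ t).const_mul (1 - α)
    rw [show psiA ψ α t = (1 - α) * ψ t by rw [psiA, if_pos ht.le]]
    refine h.congr_of_eventuallyEq ?_ (rhoA_of_neg ht)
    refine eventually_of_mem (mem_nhdsWithin_of_mem_nhds (Iio_mem_nhds ht)) ?_
    intro s hs
    exact rhoA_of_neg hs
  · subst ht
    have h := (hψ 0).const_mul (1 - α)
    rw [show psiA ψ α 0 = (1 - α) * ψ 0 by rw [psiA, if_pos le_rfl]]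
    refine h.congr (fun s hs => rhoA_of_neg hs) ?_
    rw [rhoA_zero', hρ0]; ring
  · have h := (hψ t).const_mul α
    rw [show psiA ψ α t = α * ψ t by rw [psiA, if_neg (by linarith)]]
    refine h.congr_of_eventuallyEq ?_ (rhoA_of_pos ht)
    refine eventually_of_mem (mem_nhdsWithin_of_mem_nhds (Ioi_mem_nhds ht)) ?_
    intro s hs
    exact rhoA_of_pos hs

theorem stmt_1 (α : ℝ) (hα : α ∈ Set.Ioo (0 : ℝ) 1)
    (ρ ψ : ℝ → ℝ) (hρ : LossClass ρ) (hψ : IsLeftDeriv ρ ψ)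
    (P : Measure ℝ) [IsProbabilityMeasure P]
    (hP1 : ∀ θ : ℝ, P {θ} < 1)
    (hP2 : ∀ θ : ℝ, Integrable (fun z => |ψ (z - θ)|) P) :
    (∀ θ : ℝ, 0 < ∫ z, |ψ (z - θ)| ∂P) ∧
    (∀ θ D : ℝ, HasDerivWithinAt (Obj ρ α P) D (Set.Ioi θ) θ →
      ((0 < D ↔ α < Gfun ψ P θ) ∧ (D = 0 ↔ Gfun ψ P θ = α) ∧
        (D < 0 ↔ Gfun ψ P θ < α))) := by
  obtain ⟨hα0, hα1⟩ := hα
  obtain ⟨hconv, hnn, heven, hzero⟩ := hρ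
  have hρ0 : ρ 0 = 0 := (hzero 0).mpr rfl
  have hpos : ∀ t : ℝ, t ≠ 0 → 0 < ρ t := fun t ht =>
    lt_of_le_of_ne (hnn t) (fun h => ht ((hzero t).mp h.symm))
  -- sign facts for ψ
  have hψposf : ∀ t : ℝ, 0 < t → 0 < ψ t := by
    intro t ht
    have h := (aux_slope_bounds hconv hψ ht).2
    have h2 : (0:ℝ) < (ρ t - ρ 0) / (t - 0) := by
      rw [hρ0, sub_zero, sub_zero]
      exact div_pos (hpos t (by linarith)) ht
    linarith
  have hψnegf : ∀ t : ℝ, t < 0 → ψ t < 0 := by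
    intro t ht
    have h := (aux_slope_bounds hconv hψ ht).1
    have h2 : (ρ 0 - ρ t) / (0 - t) < 0 := by
      rw [hρ0, zero_sub, zero_sub]
      apply div_neg_of_neg_of_pos
      · linarith [hpos t (by linarith)]
      · linarith
    linarith
  have hψ0 : ψ 0 ≤ 0 := by
    have h1 : Tendsto (slope ρ 0) (nhdsWithin 0 (Iio 0)) (nhds (ψ 0)) := by
      have := hasDerivWithinAt_iff_tendsto_slope.1 (hψ 0)
      rwa [Set.diff_singleton_eq_self (by simp)] at this
    refine le_of_tendsto h1 ?_
    filter_upwards [self_mem_nhdsWithin] with w hw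
    rw [slope_def_field, hρ0]
    exact div_nonpos_iff.mpr (Or.inl ⟨by linarith [hnn w], by
      have : w < 0 := hw
      linarith⟩)
  have hψmono : Monotone ψ := by
    intro x y hxy
    rcases eq_or_lt_of_le hxy with rfl | h
    · exact le_rfl
    · exact (aux_slope_bounds hconv hψ h).1.trans (aux_slope_bounds hconv hψ h).2
  have hψnonpos : ∀ t : ℝ, t ≤ 0 → ψ t ≤ 0 := fun t ht => (hψmono ht).trans hψ0
  -- part 1
  have part1 : ∀ θ : ℝ, 0 < ∫ z, |ψ (z - θ)| ∂P := by
    intro θ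
    rw [integral_pos_iff_support_of_nonneg (fun z => abs_nonneg _) (hP2 θ)]
    have hsub : ({θ}ᶜ : Set ℝ) ⊆ Function.support fun z => |ψ (z - θ)| := by
      intro z hz
      have hzθ : z ≠ θ := hz
      simp only [Function.mem_support, ne_eq, abs_eq_zero]
      rcases lt_or_gt_of_ne hzθ with h | h
      · exact ne_of_lt (hψnegf _ (by linarith))
      · exact ne_of_gt (hψposf _ (by linarith))
    refine lt_of_lt_of_le ?_ (measure_mono hsub)
    rw [prob_compl_eq_one_sub (measurableSet_singleton θ)]
    exact tsub_pos_iff_lt.mpr (hP1 θ)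
  refine ⟨part1, ?_⟩
  -- preparation for part 2
  have hφconv : ConvexOn ℝ Set.univ (rhoA ρ α) := rhoA_convex hα0 hα1 hconv hρ0 hnn heven
  have hφderiv : ∀ t : ℝ, HasDerivWithinAt (rhoA ρ α) (psiA ψ α t) (Set.Iio t) t :=
    rhoA_leftDeriv hρ0 hψ
  have hφcont : Continuous (rhoA ρ α) := by
    rw [← continuousOn_univ]
    exact hφconv.continuousOn isOpen_univ
  have habs_psiA : ∀ t : ℝ, |psiA ψ α t| ≤ |ψ t| := by
    intro t
    rw [psiA, abs_mul]
    have h1 : |if t ≤ 0 then 1 - α else α| ≤ 1 := by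
      split <;> rw [abs_of_nonneg (by linarith)] <;> linarith
    nlinarith [abs_nonneg (ψ t)]
  have key_bound : ∀ u v : ℝ, |rhoA ρ α u - rhoA ρ α v| ≤ |u - v| * (|ψ u| + |ψ v|) := by
    have main : ∀ u v : ℝ, u < v →
        |rhoA ρ α v - rhoA ρ α u| ≤ (v - u) * (|ψ u| + |ψ v|) := by
      intro u v huv
      obtain ⟨h1, h2⟩ := aux_slope_bounds hφconv hφderiv huv
      have hvu : (0:ℝ) < v - u := by linarith
      have hqabs : |(rhoA ρ α v - rhoA ρ α u) / (v - u)| ≤ |ψ u| + |ψ v| := by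
        rw [abs_le]
        constructor
        · have ha := habs_psiA u
          have hb := abs_nonneg (ψ v)
          have hc := neg_abs_le (psiA ψ α u)
          linarith
        · have ha := habs_psiA v
          have hb := abs_nonneg (ψ u)
          have hc := le_abs_self (psiA ψ α v)
          linarith
      have heq : rhoA ρ α v - rhoA ρ α u = ((rhoA ρ α v - rhoA ρ α u) / (v - u)) * (v - u) := by
        field_simp
      rw [heq, abs_mul, abs_of_pos hvu, mul_comm]
      exact mul_le_mul_of_nonneg_left hqabs hvu.le
    intro u v
    rcases lt_trichotomy u v with h | rfl | h
    · rw [abs_sub_comm, show |u - v| = v - u by rw [abs_sub_comm]; exact abs_of_pos (by linarith)]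
      exact main u v h
    · simp
    · rw [show |u - v| = u - v from abs_of_pos (by linarith)]
      have := main v u h
      rw [show |ψ v| + |ψ u| = |ψ u| + |ψ v| from add_comm _ _] at this
      exact this
  have hLint : ∀ a b : ℝ, Integrable (fun z => rhoA ρ α (z - a) - rhoA ρ α (z - b)) P := by
    intro a b
    have hmeas : AEStronglyMeasurable (fun z => rhoA ρ α (z - a) - rhoA ρ α (z - b)) P :=
      (((hφcont.comp (continuous_id.sub continuous_const)).sub
        (hφcont.comp (continuous_id.sub continuous_const)))).aestronglyMeasurable
    have hbint : Integrable (fun z => |b - a| * (|ψ (z - a)| + |ψ (z - b)|)) P :=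
      (((hP2 a).add (hP2 b)).const_mul _)
    refine hbint.mono' hmeas ?_
    filter_upwards with z
    rw [Real.norm_eq_abs]
    have h := key_bound (z - a) (z - b)
    have h2 : |(z - a) - (z - b)| = |b - a| := by rw [show (z - a) - (z - b) = b - a by ring]
    rw [h2] at h
    exact h
  have hint0 : ∀ a : ℝ, Integrable (fun z => rhoA ρ α (z - a) - rhoA ρ α z) P := by
    intro a
    have := hLint a 0
    simpa using this
  -- part 2
  intro θ D hD
  set A := ∫ z, |ψ (z - θ)| * (if z ≤ θ then 1 else 0) ∂P with hA
  set S := ∫ z, |ψ (z - θ)| ∂P with hS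
  have hSpos : 0 < S := part1 θ
  have hAint : Integrable (fun z => |ψ (z - θ)| * (if z ≤ θ then 1 else 0)) P := by
    refine (hP2 θ).mono' ?_ ?_
    · exact (hP2 θ).aestronglyMeasurable.mul
        ((Measurable.ite (show MeasurableSet {z : ℝ | z ≤ θ} from measurableSet_Iic)
          measurable_const measurable_const).aestronglyMeasurable)
    · filter_upwards with z
      rw [Real.norm_eq_abs, abs_mul]
      split
      · simp [abs_abs]
      · simp [abs_nonneg]
  -- per-z one-sided derivative
  have hz_deriv : ∀ z : ℝ, HasDerivWithinAt (fun θ' => rhoA ρ α (z - θ'))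
      (-(psiA ψ α (z - θ))) (Set.Ioi θ) θ := by
    intro z
    have inner : HasDerivWithinAt (fun θ' : ℝ => z - θ') (-1) (Set.Ioi θ) θ := by
      simpa using (hasDerivWithinAt_id θ (Set.Ioi θ)).const_sub z
    have outer := hφderiv (z - θ)
    have hmap : Set.MapsTo (fun θ' : ℝ => z - θ') (Set.Ioi θ) (Set.Iio (z - θ)) :=
      fun x hx => sub_lt_sub_left hx z
    have h := HasDerivWithinAt.comp θ outer inner hmap
    simpa [Function.comp_def, mul_comm] using h
  have hθnotmem : θ ∉ Set.Ioi θ := by simp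
  set F : ℝ → ℝ → ℝ := fun θ' z => (rhoA ρ α (z - θ') - rhoA ρ α (z - θ)) / (θ' - θ) with hF
  set l := nhdsWithin θ (Set.Ioi θ) with hl
  have hFmeas : ∀ θ' : ℝ, AEStronglyMeasurable (F θ') P := by
    intro θ'
    exact ((((hφcont.comp (continuous_id.sub continuous_const)).sub
        (hφcont.comp (continuous_id.sub continuous_const))).div_const _)).aestronglyMeasurable
  have hbound_int : Integrable (fun z => |ψ (z - (θ+1))| + |ψ (z - θ)|) P :=
    (hP2 (θ+1)).add (hP2 θ)
  have h_bound : ∀ᶠ θ' in l, ∀ᵐ z ∂P, ‖F θ' z‖ ≤ |ψ (z - (θ+1))| + |ψ (z - θ)| := by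
    rw [hl]
    filter_upwards [Ioo_mem_nhdsGT_of_mem
      (show θ ∈ Set.Ico θ (θ+1) from ⟨le_rfl, by linarith⟩)] with θ' hθ'
    filter_upwards with z
    obtain ⟨h1, h2⟩ := hθ'
    have hab : z - θ' < z - θ := by linarith
    have hca : z - (θ+1) < z - θ' := by linarith
    have hq := aux_slope_bounds hφconv hφderiv hab
    have e1 : F θ' z =
        -((rhoA ρ α (z - θ) - rhoA ρ α (z - θ')) / ((z - θ) - (z - θ'))) := by
      simp only [hF]
      rw [show (z - θ) - (z - θ') = θ' - θ by ring]
      ring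
    -- upper bound via the slope over [z-(θ+1), z-θ]
    have hsec := hφconv.secant_mono (Set.mem_univ (z - θ)) (Set.mem_univ (z - (θ+1)))
      (Set.mem_univ (z - θ')) (ne_of_lt (hca.trans hab)) (ne_of_lt hab) (le_of_lt hca)
    -- hsec : (φ c - φ b)/(c - b) ≤ (φ a - φ b)/(a - b)
    have e2 : (rhoA ρ α (z - θ') - rhoA ρ α (z - θ)) / ((z - θ') - (z - θ)) =
        (rhoA ρ α (z - θ) - rhoA ρ α (z - θ')) / ((z - θ) - (z - θ')) := by
      rw [show rhoA ρ α (z - θ') - rhoA ρ α (z - θ)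
            = -(rhoA ρ α (z - θ) - rhoA ρ α (z - θ')) by ring,
        show (z - θ') - (z - θ) = -((z - θ) - (z - θ')) by ring, neg_div_neg_eq]
    rw [e2] at hsec
    have e3 : (rhoA ρ α (z - (θ+1)) - rhoA ρ α (z - θ)) / ((z - (θ+1)) - (z - θ)) =
        -(rhoA ρ α (z - (θ+1)) - rhoA ρ α (z - θ)) := by
      rw [show (z - (θ+1)) - (z - θ) = -1 by ring]
      ring
    rw [e3] at hsec
    have hkb := key_bound (z - (θ+1)) (z - θ)
    have e4 : |(z - (θ+1)) - (z - θ)| = 1 := by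
      rw [show (z - (θ+1)) - (z - θ) = -1 by ring]
      norm_num
    rw [e4, one_mul] at hkb
    have hup : psiA ψ α (z - θ) ≤ |ψ (z - θ)| :=
      (le_abs_self _).trans (habs_psiA _)
    rw [Real.norm_eq_abs, e1, abs_le]
    constructor
    · have := hq.2
      have h6 := abs_nonneg (ψ (z - (θ+1)))
      linarith
    · have h7 := le_abs_self (rhoA ρ α (z - (θ+1)) - rhoA ρ α (z - θ))
      linarith
  have h_lim : ∀ᵐ z ∂P, Tendsto (fun θ' => F θ' z) l (nhds (-(psiA ψ α (z - θ)))) := by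
    filter_upwards with z
    have h := (hasDerivWithinAt_iff_tendsto_slope' hθnotmem).1 (hz_deriv z)
    refine Tendsto.congr (fun θ' => ?_) h
    rw [slope_def_field]
  have hTend : Tendsto (fun θ' => ∫ z, F θ' z ∂P) l
      (nhds (∫ z, -(psiA ψ α (z - θ)) ∂P)) :=
    tendsto_integral_filter_of_dominated_convergence _
      (Eventually.of_forall hFmeas) h_bound hbound_int h_lim
  have hInt_eq : ∫ z, -(psiA ψ α (z - θ)) ∂P = A - α * S := by
    have hpt : ∀ z : ℝ, -(psiA ψ α (z - θ)) =
        |ψ (z - θ)| * (if z ≤ θ then 1 else 0) - α * |ψ (z - θ)| := by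
      intro z
      rcases le_or_gt z θ with h | h
      · rw [if_pos h, psiA, if_pos (by linarith : z - θ ≤ 0), mul_one]
        have hneg : ψ (z - θ) ≤ 0 := hψnonpos _ (by linarith)
        rw [abs_of_nonpos hneg]; ring
      · rw [if_neg (not_le.mpr h), psiA, if_neg (by simp; linarith), mul_zero]
        have hp : 0 < ψ (z - θ) := hψposf _ (by linarith)
        rw [abs_of_pos hp]; ring
    simp only [hpt]
    rw [integral_sub hAint ((hP2 θ).const_mul α), integral_const_mul]
  have hObjSlope : ∀ᶠ θ' in l, slope (Obj ρ α P) θ θ' = ∫ z, F θ' z ∂P := by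
    filter_upwards [self_mem_nhdsWithin] with θ' hθ'
    have hdiff : Obj ρ α P θ' - Obj ρ α P θ =
        ∫ z, (rhoA ρ α (z - θ') - rhoA ρ α (z - θ)) ∂P := by
      rw [Obj, Obj, ← integral_sub (hint0 θ') (hint0 θ)]
      congr 1
      funext z
      ring
    rw [slope_def_field, hdiff, ← integral_div]
  have hD0 : HasDerivWithinAt (Obj ρ α P) (A - α * S) (Set.Ioi θ) θ := by
    rw [hasDerivWithinAt_iff_tendsto_slope' hθnotmem]
    rw [hInt_eq] at hTend
    exact Tendsto.congr' (hObjSlope.mono fun _ h => h.symm) hTend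
  have hDval : D = A - α * S := by
    have h1 := hD.derivWithin (uniqueDiffWithinAt_Ioi θ)
    have h2 := hD0.derivWithin (uniqueDiffWithinAt_Ioi θ)
    rw [← h1, ← h2]
  have hG : Gfun ψ P θ = A / S := by rw [Gfun, hA, hS]
  refine ⟨?_, ?_, ?_⟩
  · rw [hDval, hG]
    constructor
    · intro h
      rw [lt_div_iff₀ hSpos]
      linarith
    · intro h
      rw [lt_div_iff₀ hSpos] at h
      linarith
  · rw [hDval, hG]
    constructor
    · intro h
      rw [div_eq_iff hSpos.ne']
      linarith
    · intro h
      rw [div_eq_iff hSpos.ne'] at h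
      linarith
  · rw [hDval, hG]
    constructor
    · intro h
      rw [div_lt_iff₀ hSpos]
      linarith
    · intro h
      rw [div_lt_iff₀ hSpos] at h
      linarith
end
end

section
/- Fix α ∈ (0,1), ρ ∈ 𝒞 and P ∈ 𝒫^ρ. If the left-derivative ψ₋ of ρ is continuous on ℝ, or if P is non-atomic, then G^ρ is continuous at the point θ^ρ_α(P) = inf{θ ∈ ℝ : G^ρ(θ) ≥ α}, and consequently G^ρ(θ^ρ_α(P)) = α. -/
open MeasureTheory Set Filter

noncomputable section

section AuxMQ

variable {ρ ψ : ℝ → ℝ}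

lemma psi_tendsto {ρ ψ : ℝ → ℝ} (hψ : ∀ x : ℝ, HasDerivWithinAt ρ (ψ x) (Set.Iio x) x) (x : ℝ) :
    Tendsto (slope ρ x) (nhdsWithin x (Set.Iio x)) (nhds (ψ x)) := by
  have := hψ x
  rwa [hasDerivWithinAt_iff_tendsto_slope, Set.diff_singleton_eq_self (by simp)] at this

lemma psi_le_slope {ρ ψ : ℝ → ℝ} (hc : ConvexOn ℝ Set.univ ρ)
    (hψ : ∀ x : ℝ, HasDerivWithinAt ρ (ψ x) (Set.Iio x) x) {x y : ℝ} (hxy : x < y) :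
    ψ x ≤ (ρ y - ρ x) / (y - x) := by
  refine le_of_tendsto (psi_tendsto hψ x) ?_
  filter_upwards [self_mem_nhdsWithin] with w (hw : w < x)
  rw [slope_def_field]; exact hc.secant_mono (mem_univ x) (mem_univ w) (mem_univ y) (ne_of_lt hw) (ne_of_gt hxy) (le_of_lt (hw.trans hxy))

lemma slope_le_psi {ρ ψ : ℝ → ℝ} (hc : ConvexOn ℝ Set.univ ρ)
    (hψ : ∀ x : ℝ, HasDerivWithinAt ρ (ψ x) (Set.Iio x) x) {x y : ℝ} (hxy : x < y) :
    (ρ y - ρ x) / (y - x) ≤ ψ y := by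
  have h : (ρ y - ρ x) / (y - x) = (ρ x - ρ y) / (x - y) := by
    rw [← neg_div_neg_eq]; ring_nf
  rw [h]
  refine ge_of_tendsto (psi_tendsto hψ y) ?_
  have hx : ∀ᶠ w in nhdsWithin y (Set.Iio y), x < w :=
    eventually_nhdsWithin_of_eventually_nhds (eventually_gt_nhds hxy)
  filter_upwards [self_mem_nhdsWithin, hx] with w (hw : w < y) hxw
  rw [slope_def_field]; exact hc.secant_mono (mem_univ y) (mem_univ x) (mem_univ w) (ne_of_lt hxy) (ne_of_lt hw) (le_of_lt hxw)

lemma psi_mono {ρ ψ : ℝ → ℝ} (hc : ConvexOn ℝ Set.univ ρ)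
    (hψ : ∀ x : ℝ, HasDerivWithinAt ρ (ψ x) (Set.Iio x) x) : Monotone ψ := by
  intro x y hxy
  rcases eq_or_lt_of_le hxy with rfl | h
  · exact le_rfl
  · exact (psi_le_slope hc hψ h).trans (slope_le_psi hc hψ h)

variable {ρ ψ : ℝ → ℝ}

lemma rho_zero (hρ : LossClass ρ) : ρ 0 = 0 := (hρ.2.2.2 0).2 rfl

lemma rho_pos (hρ : LossClass ρ) {t : ℝ} (ht : t ≠ 0) : 0 < ρ t :=
  lt_of_le_of_ne (hρ.2.1 t) (fun h => ht ((hρ.2.2.2 t).1 h.symm))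

lemma psi_pos (hρ : LossClass ρ) (hψ : ∀ x : ℝ, HasDerivWithinAt ρ (ψ x) (Set.Iio x) x)
    {t : ℝ} (ht : 0 < t) : 0 < ψ t := by
  have h := slope_le_psi hρ.1 hψ ht
  rw [rho_zero hρ, sub_zero, sub_zero] at h
  exact lt_of_lt_of_le (div_pos (rho_pos hρ (ne_of_gt ht)) ht) h

lemma psi_neg (hρ : LossClass ρ) (hψ : ∀ x : ℝ, HasDerivWithinAt ρ (ψ x) (Set.Iio x) x)
    {t : ℝ} (ht : t < 0) : ψ t < 0 := by
  have h := psi_le_slope hρ.1 hψ ht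
  rw [rho_zero hρ, zero_sub, zero_sub] at h
  have : (-ρ t) / (-t) < 0 := div_neg_of_neg_of_pos (neg_neg_iff_pos.mpr (rho_pos hρ (ne_of_lt ht))) (neg_pos.mpr ht)
  exact lt_of_le_of_lt h this

lemma psi_zero_nonpos (hρ : LossClass ρ) (hψ : ∀ x : ℝ, HasDerivWithinAt ρ (ψ x) (Set.Iio x) x) :
    ψ 0 ≤ 0 := by
  refine le_of_tendsto (psi_tendsto hψ 0) ?_
  filter_upwards [self_mem_nhdsWithin] with w (hw : w < 0)
  rw [slope_def_field, rho_zero hρ, sub_zero, sub_zero]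
  exact le_of_lt (div_neg_of_pos_of_neg (rho_pos hρ (ne_of_lt hw)) hw)

lemma psi_ne_zero (hρ : LossClass ρ) (hψ : ∀ x : ℝ, HasDerivWithinAt ρ (ψ x) (Set.Iio x) x)
    {t : ℝ} (ht : t ≠ 0) : ψ t ≠ 0 := by
  rcases lt_or_gt_of_ne ht with h | h
  · exact ne_of_lt (psi_neg hρ hψ h)
  · exact ne_of_gt (psi_pos hρ hψ h)

lemma psi_zero_of_cont (hρ : LossClass ρ) (hψ : ∀ x : ℝ, HasDerivWithinAt ρ (ψ x) (Set.Iio x) x)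
    (hc : Continuous ψ) : ψ 0 = 0 := by
  refine le_antisymm (psi_zero_nonpos hρ hψ) ?_
  have : Tendsto ψ (nhdsWithin 0 (Set.Ioi 0)) (nhds (ψ 0)) :=
    (hc.continuousAt).continuousWithinAt.tendsto
  refine ge_of_tendsto this ?_
  filter_upwards [self_mem_nhdsWithin] with w (hw : 0 < w)
  exact le_of_lt (psi_pos hρ hψ hw)

lemma psi_measurable (hc : ConvexOn ℝ Set.univ ρ)
    (hψ : ∀ x : ℝ, HasDerivWithinAt ρ (ψ x) (Set.Iio x) x) : Measurable ψ :=
  (psi_mono hc hψ).measurable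

open MeasureTheory in
noncomputable def Nfun (ψ : ℝ → ℝ) (P : Measure ℝ) (θ : ℝ) : ℝ :=
  ∫ z, |ψ (z - θ)| * (if z ≤ θ then 1 else 0) ∂P

noncomputable def Dfun (ψ : ℝ → ℝ) (P : Measure ℝ) (θ : ℝ) : ℝ :=
  ∫ z, |ψ (z - θ)| ∂P

noncomputable def Mfun (ψ : ℝ → ℝ) (P : Measure ℝ) (θ : ℝ) : ℝ :=
  ∫ z, |ψ (z - θ)| * (if θ < z then 1 else 0) ∂P

lemma meas_base (hm : Measurable ψ) (θ : ℝ) : Measurable fun z : ℝ => |ψ (z - θ)| :=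
  (hm.comp (measurable_id.sub measurable_const)).abs

lemma meas_Nint (hm : Measurable ψ) (θ : ℝ) :
    Measurable fun z : ℝ => |ψ (z - θ)| * (if z ≤ θ then 1 else 0) :=
  (meas_base hm θ).mul (Measurable.ite measurableSet_Iic measurable_const measurable_const)

lemma meas_Mint (hm : Measurable ψ) (θ : ℝ) :
    Measurable fun z : ℝ => |ψ (z - θ)| * (if θ < z then 1 else 0) :=
  (meas_base hm θ).mul (Measurable.ite measurableSet_Ioi measurable_const measurable_const)

lemma ind_bound (c : ℝ) (p : Prop) [Decidable p] : |c| * (if p then (1:ℝ) else 0) ≤ |c| := by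
  by_cases h : p <;> simp [h, abs_nonneg]

lemma int_N (hm : Measurable ψ) {P : Measure ℝ} (hP2 : ∀ θ : ℝ, Integrable (fun z => |ψ (z - θ)|) P)
    (θ : ℝ) : Integrable (fun z => |ψ (z - θ)| * (if z ≤ θ then 1 else 0)) P := by
  refine (hP2 θ).mono' (meas_Nint hm θ).aestronglyMeasurable ?_
  filter_upwards with z
  rw [Real.norm_eq_abs, abs_mul, abs_abs]
  exact (mul_le_of_le_one_right (abs_nonneg _) (by split <;> simp)).trans (le_refl _)

lemma int_M (hm : Measurable ψ) {P : Measure ℝ} (hP2 : ∀ θ : ℝ, Integrable (fun z => |ψ (z - θ)|) P)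
    (θ : ℝ) : Integrable (fun z => |ψ (z - θ)| * (if θ < z then 1 else 0)) P := by
  refine (hP2 θ).mono' (meas_Mint hm θ).aestronglyMeasurable ?_
  filter_upwards with z
  rw [Real.norm_eq_abs, abs_mul, abs_abs]
  exact mul_le_of_le_one_right (abs_nonneg _) (by split <;> simp)

lemma D_eq_N_add_M (hm : Measurable ψ) {P : Measure ℝ}
    (hP2 : ∀ θ : ℝ, Integrable (fun z => |ψ (z - θ)|) P) (θ : ℝ) :
    Dfun ψ P θ = Nfun ψ P θ + Mfun ψ P θ := by
  rw [Nfun, Mfun, Dfun, ← integral_add (int_N hm hP2 θ) (int_M hm hP2 θ)]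
  congr 1; funext z
  rcases le_or_gt z θ with h | h
  · simp [h, not_lt.mpr h]
  · simp [h, not_le.mpr h]

lemma psi_shift_bound (hmono : Monotone ψ) {θ0 θ : ℝ} (hθ : θ ∈ Set.Icc (θ0 - 1) (θ0 + 1)) (z : ℝ) :
    |ψ (z - θ)| ≤ |ψ (z - (θ0 + 1))| + |ψ (z - (θ0 - 1))| := by
  have h1 : ψ (z - (θ0 + 1)) ≤ ψ (z - θ) := hmono (by linarith [hθ.2])
  have h2 : ψ (z - θ) ≤ ψ (z - (θ0 - 1)) := hmono (by linarith [hθ.1])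
  calc |ψ (z - θ)| ≤ max |ψ (z - (θ0 + 1))| |ψ (z - (θ0 - 1))| := abs_le_max_abs_abs h1 h2
    _ ≤ _ := max_le (le_add_of_nonneg_right (abs_nonneg _)) (le_add_of_nonneg_left (abs_nonneg _))

lemma cont_D (hmono : Monotone ψ) (hm : Measurable ψ) {P : Measure ℝ} [IsProbabilityMeasure P]
    (hP2 : ∀ θ : ℝ, Integrable (fun z => |ψ (z - θ)|) P) {θ0 : ℝ}
    (hae : ∀ᵐ z ∂P, ContinuousAt ψ (z - θ0)) :
    ContinuousAt (Dfun ψ P) θ0 := by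
  have key : Tendsto (fun θ => Dfun ψ P θ) (nhds θ0) (nhds (Dfun ψ P θ0)) := by
    refine tendsto_integral_filter_of_dominated_convergence
      (fun z => |ψ (z - (θ0 + 1))| + |ψ (z - (θ0 - 1))|)
      (Eventually.of_forall fun θ => (meas_base hm θ).aestronglyMeasurable) ?_
      ((hP2 _).add (hP2 _)) ?_
    · filter_upwards [Icc_mem_nhds (by linarith : θ0 - 1 < θ0) (by linarith : θ0 < θ0 + 1)] with θ hθ
      filter_upwards with z
      rw [Real.norm_eq_abs, abs_abs]
      exact psi_shift_bound hmono hθ z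
    · filter_upwards [hae] with z hz
      have h1 : Tendsto (fun θ : ℝ => z - θ) (nhds θ0) (nhds (z - θ0)) :=
        tendsto_const_nhds.sub tendsto_id
      exact (continuous_abs.continuousAt.tendsto).comp (hz.tendsto.comp h1)
  exact key

lemma cont_N (hmono : Monotone ψ) (hm : Measurable ψ) {P : Measure ℝ} [IsProbabilityMeasure P]
    (hP2 : ∀ θ : ℝ, Integrable (fun z => |ψ (z - θ)|) P) {θ0 : ℝ}
    (hae : ∀ᵐ z ∂P, Tendsto (fun θ => |ψ (z - θ)| * (if z ≤ θ then 1 else 0)) (nhds θ0)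
      (nhds (|ψ (z - θ0)| * (if z ≤ θ0 then 1 else 0)))) :
    ContinuousAt (Nfun ψ P) θ0 := by
  refine tendsto_integral_filter_of_dominated_convergence
    (fun z => |ψ (z - (θ0 + 1))| + |ψ (z - (θ0 - 1))|)
    (Eventually.of_forall fun θ => (meas_Nint hm θ).aestronglyMeasurable) ?_
    ((hP2 _).add (hP2 _)) hae
  · filter_upwards [Icc_mem_nhds (by linarith : θ0 - 1 < θ0) (by linarith : θ0 < θ0 + 1)] with θ hθ
    filter_upwards with z
    rw [Real.norm_eq_abs, abs_mul, abs_abs]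
    exact ((mul_le_of_le_one_right (abs_nonneg _) (by split <;> simp)).trans
      (psi_shift_bound hmono hθ z))

lemma tendsto_Nint_of_ne {θ0 z : ℝ} (hz : ContinuousAt ψ (z - θ0)) (hne : z ≠ θ0) :
    Tendsto (fun θ => |ψ (z - θ)| * (if z ≤ θ then 1 else 0)) (nhds θ0)
      (nhds (|ψ (z - θ0)| * (if z ≤ θ0 then 1 else 0))) := by
  have habs : Tendsto (fun θ : ℝ => |ψ (z - θ)|) (nhds θ0) (nhds |ψ (z - θ0)|) :=
    (continuous_abs.continuousAt.tendsto).comp (hz.tendsto.comp (tendsto_const_nhds.sub tendsto_id))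
  rcases lt_or_gt_of_ne hne with h | h
  · have he : ∀ᶠ θ in nhds θ0, |ψ (z - θ)| * (if z ≤ θ then 1 else 0) = |ψ (z - θ)| := by
      filter_upwards [eventually_gt_nhds h] with θ hθ
      simp [le_of_lt hθ]
    rw [if_pos (le_of_lt h), mul_one]
    exact habs.congr' (EventuallyEq.symm he)
  · have he : ∀ᶠ θ in nhds θ0, |ψ (z - θ)| * (if z ≤ θ then 1 else 0) = 0 := by
      filter_upwards [eventually_lt_nhds h] with θ hθ
      simp [not_le.mpr hθ]
    rw [if_neg (not_le.mpr h), mul_zero]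
    exact tendsto_const_nhds.congr' (EventuallyEq.symm he)

lemma tendsto_Nint_of_eq {θ0 : ℝ} (hz : ContinuousAt ψ 0) (hψ0 : ψ 0 = 0) :
    Tendsto (fun θ => |ψ (θ0 - θ)| * (if θ0 ≤ θ then 1 else 0)) (nhds θ0)
      (nhds (|ψ (θ0 - θ0)| * (if θ0 ≤ θ0 then 1 else 0))) := by
  have habs : Tendsto (fun θ : ℝ => |ψ (θ0 - θ)|) (nhds θ0) (nhds |ψ (θ0 - θ0)|) := by
    have : Tendsto (fun θ : ℝ => θ0 - θ) (nhds θ0) (nhds (θ0 - θ0)) :=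
      tendsto_const_nhds.sub tendsto_id
    have h0 : ContinuousAt ψ (θ0 - θ0) := by rwa [sub_self]
    exact (continuous_abs.continuousAt.tendsto).comp (h0.tendsto.comp this)
  have hval : |ψ (θ0 - θ0)| * (if θ0 ≤ θ0 then 1 else 0) = 0 := by
    simp [sub_self, hψ0]
  rw [hval]
  have h0 : |ψ (θ0 - θ0)| = 0 := by simp [sub_self, hψ0]
  refine tendsto_of_tendsto_of_tendsto_of_le_of_le
    (tendsto_const_nhds : Tendsto (fun _ : ℝ => (0:ℝ)) (nhds θ0) (nhds 0)) (h0 ▸ habs) ?_ ?_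
  · intro θ; positivity
  · intro θ; exact ind_bound _ _

lemma ae_contAt (hmono : Monotone ψ) {P : Measure ℝ} (hP0 : ∀ θ : ℝ, P {θ} = 0) (θ0 : ℝ) :
    ∀ᵐ z ∂P, ContinuousAt ψ (z - θ0) := by
  have : NoAtoms P := ⟨hP0⟩
  have hB : Set.Countable {x : ℝ | ¬ContinuousAt ψ x} := hmono.countable_not_continuousAt
  have hpre : Set.Countable {z : ℝ | ¬ContinuousAt ψ (z - θ0)} := by
    have : {z : ℝ | ¬ContinuousAt ψ (z - θ0)} = (fun z => z - θ0) ⁻¹' {x | ¬ContinuousAt ψ x} := rfl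
    rw [this]
    exact hB.preimage (sub_left_injective)
  rw [ae_iff]
  exact measure_mono_null (fun z hz => hz) (by haveI : NullSingletonClass P := ⟨hP0⟩; exact hpre.measure_zero P)

lemma compl_singleton_pos {P : Measure ℝ} [IsProbabilityMeasure P] {θ : ℝ} (h : P {θ} < 1) :
    0 < P ({θ}ᶜ) := by
  rw [prob_compl_eq_one_sub (measurableSet_singleton θ)]
  exact tsub_pos_iff_lt.mpr h

lemma pos_D (hρ : LossClass ρ) (hψ : ∀ x : ℝ, HasDerivWithinAt ρ (ψ x) (Set.Iio x) x)
    {P : Measure ℝ} [IsProbabilityMeasure P]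
    (hP2 : ∀ θ : ℝ, Integrable (fun z => |ψ (z - θ)|) P) {θ : ℝ} (h1 : P {θ} < 1) :
    0 < Dfun ψ P θ := by
  rw [Dfun, integral_pos_iff_support_of_nonneg (fun z => abs_nonneg _) (hP2 θ)]
  refine lt_of_lt_of_le (compl_singleton_pos h1) (measure_mono ?_)
  intro z hz
  simp only [Function.mem_support, ne_eq, abs_eq_zero]
  exact psi_ne_zero hρ hψ (sub_ne_zero.mpr hz)

lemma pos_N (hρ : LossClass ρ) (hψ : ∀ x : ℝ, HasDerivWithinAt ρ (ψ x) (Set.Iio x) x)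
    (hm : Measurable ψ) {P : Measure ℝ} [IsProbabilityMeasure P]
    (hP2 : ∀ θ : ℝ, Integrable (fun z => |ψ (z - θ)|) P) {θ : ℝ} (h1 : 0 < P (Set.Iio θ)) :
    0 < Nfun ψ P θ := by
  rw [Nfun, integral_pos_iff_support_of_nonneg
    (fun z => mul_nonneg (abs_nonneg _) (by split <;> norm_num)) (int_N hm hP2 θ)]
  refine lt_of_lt_of_le h1 (measure_mono ?_)
  intro z (hz : z < θ)
  simp only [Function.mem_support, if_pos (le_of_lt hz), mul_one, ne_eq, abs_eq_zero]
  exact psi_ne_zero hρ hψ (sub_ne_zero.mpr (ne_of_lt hz))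

lemma pos_M (hρ : LossClass ρ) (hψ : ∀ x : ℝ, HasDerivWithinAt ρ (ψ x) (Set.Iio x) x)
    (hm : Measurable ψ) {P : Measure ℝ} [IsProbabilityMeasure P]
    (hP2 : ∀ θ : ℝ, Integrable (fun z => |ψ (z - θ)|) P) {θ : ℝ} (h1 : 0 < P (Set.Ioi θ)) :
    0 < Mfun ψ P θ := by
  rw [Mfun, integral_pos_iff_support_of_nonneg
    (fun z => mul_nonneg (abs_nonneg _) (by split <;> norm_num)) (int_M hm hP2 θ)]
  refine lt_of_lt_of_le h1 (measure_mono ?_)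
  intro z (hz : θ < z)
  simp only [Function.mem_support, if_pos hz, mul_one, ne_eq, abs_eq_zero]
  exact psi_ne_zero hρ hψ (sub_ne_zero.mpr (ne_of_gt hz))

lemma exists_Iio_pos (P : Measure ℝ) [IsProbabilityMeasure P] : ∃ θ : ℝ, 0 < P (Set.Iio θ) := by
  by_contra h
  push_neg at h
  have hz : ∀ θ : ℝ, P (Set.Iio θ) = 0 := fun θ => le_antisymm (h θ) (zero_le)
  have hu : (⋃ n : ℕ, Set.Iio (n : ℝ)) = Set.univ := by
    ext z
    simp only [Set.mem_iUnion, Set.mem_Iio, Set.mem_univ, iff_true]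
    exact exists_nat_gt z
  have := measure_iUnion_null (fun n : ℕ => hz (n : ℝ))
  rw [hu, measure_univ] at this
  exact one_ne_zero this

lemma exists_Ioi_pos (P : Measure ℝ) [IsProbabilityMeasure P] : ∃ θ : ℝ, 0 < P (Set.Ioi θ) := by
  by_contra h
  push_neg at h
  have hz : ∀ θ : ℝ, P (Set.Ioi θ) = 0 := fun θ => le_antisymm (h θ) (zero_le)
  have hu : (⋃ n : ℕ, Set.Ioi (-(n : ℝ))) = Set.univ := by
    ext z
    simp only [Set.mem_iUnion, Set.mem_Ioi, Set.mem_univ, iff_true]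
    obtain ⟨n, hn⟩ := exists_nat_gt (-z)
    exact ⟨n, by linarith⟩
  have := measure_iUnion_null (fun n : ℕ => hz (-(n : ℝ)))
  rw [hu, measure_univ] at this
  exact one_ne_zero this

lemma lim_M_atTop (hρ : LossClass ρ) (hψ : ∀ x : ℝ, HasDerivWithinAt ρ (ψ x) (Set.Iio x) x)
    (hmono : Monotone ψ) (hm : Measurable ψ) {P : Measure ℝ} [IsProbabilityMeasure P]
    (hP2 : ∀ θ : ℝ, Integrable (fun z => |ψ (z - θ)|) P) :
    Tendsto (Mfun ψ P) atTop (nhds 0) := by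
  have key : Tendsto (fun θ => ∫ z, |ψ (z - θ)| * (if θ < z then 1 else 0) ∂P) atTop
      (nhds (∫ _ : ℝ, (0:ℝ) ∂P)) := by
    refine tendsto_integral_filter_of_dominated_convergence (fun z => |ψ (z - 0)|)
      (Eventually.of_forall fun θ => (meas_Mint hm θ).aestronglyMeasurable) ?_ (hP2 0) ?_
    · filter_upwards [eventually_ge_atTop (0:ℝ)] with θ hθ
      filter_upwards with z
      rw [Real.norm_eq_abs, abs_mul, abs_abs]
      by_cases h : θ < z
      · rw [if_pos h, abs_of_nonneg (by norm_num : (0:ℝ) ≤ 1), mul_one]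
        have h1 : 0 < ψ (z - θ) := psi_pos hρ hψ (by linarith)
        have h2 : ψ (z - θ) ≤ ψ (z - 0) := hmono (by linarith)
        rw [abs_of_pos h1]
        exact h2.trans (le_abs_self _)
      · rw [if_neg h, abs_of_nonneg (le_refl (0:ℝ)), mul_zero]
        exact abs_nonneg _
    · filter_upwards with z
      have he : ∀ᶠ θ in atTop, |ψ (z - θ)| * (if θ < z then 1 else 0) = 0 := by
        filter_upwards [eventually_ge_atTop z] with θ hθ
        rw [if_neg (not_lt.mpr hθ), mul_zero]
      exact tendsto_const_nhds.congr' (EventuallyEq.symm he)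
  rw [integral_zero] at key; exact key

lemma lim_N_atBot (hρ : LossClass ρ) (hψ : ∀ x : ℝ, HasDerivWithinAt ρ (ψ x) (Set.Iio x) x)
    (hmono : Monotone ψ) (hm : Measurable ψ) {P : Measure ℝ} [IsProbabilityMeasure P]
    (hP2 : ∀ θ : ℝ, Integrable (fun z => |ψ (z - θ)|) P) :
    Tendsto (Nfun ψ P) atBot (nhds 0) := by
  have key : Tendsto (fun θ => ∫ z, |ψ (z - θ)| * (if z ≤ θ then 1 else 0) ∂P) atBot
      (nhds (∫ _ : ℝ, (0:ℝ) ∂P)) := by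
    refine tendsto_integral_filter_of_dominated_convergence (fun z => |ψ (z - 0)|)
      (Eventually.of_forall fun θ => (meas_Nint hm θ).aestronglyMeasurable) ?_ (hP2 0) ?_
    · filter_upwards [eventually_le_atBot (0:ℝ)] with θ hθ
      filter_upwards with z
      rw [Real.norm_eq_abs, abs_mul, abs_abs]
      by_cases h : z ≤ θ
      · rw [if_pos h, abs_of_nonneg (by norm_num : (0:ℝ) ≤ 1), mul_one]
        have h1 : ψ (z - θ) ≤ 0 := (hmono (by linarith : z - θ ≤ 0)).trans (psi_zero_nonpos hρ hψ)
        have h2 : ψ (z - 0) ≤ ψ (z - θ) := hmono (by linarith)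
        rw [abs_of_nonpos h1]
        calc -ψ (z - θ) ≤ -ψ (z - 0) := neg_le_neg h2
          _ ≤ |ψ (z - 0)| := neg_le_abs _
      · rw [if_neg h, abs_of_nonneg (le_refl (0:ℝ)), mul_zero]
        exact abs_nonneg _
    · filter_upwards with z
      have he : ∀ᶠ θ in atBot, |ψ (z - θ)| * (if z ≤ θ then 1 else 0) = 0 := by
        filter_upwards [eventually_lt_atBot z] with θ hθ
        rw [if_neg (not_le.mpr hθ), mul_zero]
      exact tendsto_const_nhds.congr' (EventuallyEq.symm he)
  rw [integral_zero] at key; exact key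

lemma D_lower_right (hρ : LossClass ρ) (hψ : ∀ x : ℝ, HasDerivWithinAt ρ (ψ x) (Set.Iio x) x)
    (hmono : Monotone ψ) (hm : Measurable ψ) {P : Measure ℝ} [IsProbabilityMeasure P]
    (hP2 : ∀ θ : ℝ, Integrable (fun z => |ψ (z - θ)|) P) {θ0 θ : ℝ} (h : θ0 ≤ θ) :
    Nfun ψ P θ0 ≤ Dfun ψ P θ := by
  refine integral_mono (int_N hm hP2 θ0) (hP2 θ) (fun z => ?_)
  by_cases hz : z ≤ θ0
  · rw [if_pos hz, mul_one]
    have h1 : ψ (z - θ0) ≤ 0 := (hmono (by linarith : z - θ0 ≤ 0)).trans (psi_zero_nonpos hρ hψ)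
    have h2 : ψ (z - θ) ≤ ψ (z - θ0) := hmono (by linarith)
    rw [abs_of_nonpos h1]
    calc -ψ (z - θ0) ≤ -ψ (z - θ) := neg_le_neg h2
      _ ≤ |ψ (z - θ)| := neg_le_abs _
  · rw [if_neg hz, mul_zero]
    exact abs_nonneg _

lemma D_lower_left (hρ : LossClass ρ) (hψ : ∀ x : ℝ, HasDerivWithinAt ρ (ψ x) (Set.Iio x) x)
    (hmono : Monotone ψ) (hm : Measurable ψ) {P : Measure ℝ} [IsProbabilityMeasure P]
    (hP2 : ∀ θ : ℝ, Integrable (fun z => |ψ (z - θ)|) P) {θ1 θ : ℝ} (h : θ ≤ θ1) :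
    Mfun ψ P θ1 ≤ Dfun ψ P θ := by
  refine integral_mono (int_M hm hP2 θ1) (hP2 θ) (fun z => ?_)
  by_cases hz : θ1 < z
  · rw [if_pos hz, mul_one]
    have h1 : 0 < ψ (z - θ1) := psi_pos hρ hψ (by linarith)
    have h2 : ψ (z - θ1) ≤ ψ (z - θ) := hmono (by linarith)
    rw [abs_of_pos h1]
    exact h2.trans (le_abs_self _)
  · rw [if_neg hz, mul_zero]
    exact abs_nonneg _

end AuxMQ

theorem stmt_4 (α : ℝ) (hα : α ∈ Set.Ioo (0 : ℝ) 1)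
    (ρ ψ : ℝ → ℝ) (hρ : LossClass ρ) (hψ : IsLeftDeriv ρ ψ)
    (P : Measure ℝ) [IsProbabilityMeasure P]
    (hP1 : ∀ θ : ℝ, P {θ} < 1)
    (hP2 : ∀ θ : ℝ, Integrable (fun z => |ψ (z - θ)|) P)
    (hcont : Continuous ψ ∨ ∀ θ : ℝ, P {θ} = 0) :
    ContinuousAt (Gfun ψ P) (MQuant ψ P α) ∧
    Gfun ψ P (MQuant ψ P α) = α := by
  have hψ : ∀ x : ℝ, HasDerivWithinAt ρ (ψ x) (Set.Iio x) x := hψ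
  obtain ⟨hα0, hα1⟩ := hα
  have hm : Measurable ψ := psi_measurable hρ.1 hψ
  have hmono : Monotone ψ := psi_mono hρ.1 hψ
  have hD : ∀ θ : ℝ, 0 < Dfun ψ P θ := fun θ => pos_D hρ hψ hP2 (hP1 θ)
  have hGeq : Gfun ψ P = fun θ => Nfun ψ P θ / Dfun ψ P θ := rfl
  -- continuity of G everywhere
  have hGcont : Continuous (Gfun ψ P) := by
    rw [continuous_iff_continuousAt]
    intro θ0
    have hNc : ContinuousAt (Nfun ψ P) θ0 := by
      refine cont_N hmono hm hP2 ?_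
      rcases hcont with hc1 | hc2
      · have hψ0 : ψ 0 = 0 := psi_zero_of_cont hρ hψ hc1
        filter_upwards with z
        by_cases hz : z = θ0
        · subst hz; exact tendsto_Nint_of_eq hc1.continuousAt hψ0
        · exact tendsto_Nint_of_ne hc1.continuousAt hz
      · have h1 : ∀ᵐ z ∂P, z ≠ θ0 := by
          rw [ae_iff]
          exact measure_mono_null (fun z hz => by simpa using hz) (hc2 θ0)
        filter_upwards [h1, ae_contAt hmono hc2 θ0] with z hz1 hz2
        exact tendsto_Nint_of_ne hz2 hz1
    have hDc : ContinuousAt (Dfun ψ P) θ0 := by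
      refine cont_D hmono hm hP2 ?_
      rcases hcont with hc1 | hc2
      · filter_upwards with z; exact hc1.continuousAt
      · exact ae_contAt hmono hc2 θ0
    rw [hGeq]
    exact hNc.div hDc (ne_of_gt (hD θ0))
  -- S nonempty
  set S := {θ : ℝ | α ≤ Gfun ψ P θ} with hS
  obtain ⟨θ0, hθ0⟩ := exists_Iio_pos P
  have hcpos : 0 < Nfun ψ P θ0 := pos_N hρ hψ hm hP2 hθ0
  have hev : ∀ᶠ θ in atTop, α ≤ Gfun ψ P θ := by
    have h1 : ∀ᶠ θ in atTop, Mfun ψ P θ < (1 - α) * Nfun ψ P θ0 :=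
      (lim_M_atTop hρ hψ hmono hm hP2).eventually_lt_const
        (mul_pos (by linarith) hcpos)
    filter_upwards [h1, eventually_ge_atTop θ0] with θ hM hθ
    have hDN := D_eq_N_add_M hm hP2 θ
    have hcd : Nfun ψ P θ0 ≤ Dfun ψ P θ := D_lower_right hρ hψ hmono hm hP2 hθ
    rw [hGeq]
    rw [le_div_iff₀ (hD θ)]
    nlinarith [hD θ]
  have hne : S.Nonempty := by
    obtain ⟨θ, hθ⟩ := hev.exists
    exact ⟨θ, hθ⟩
  -- S bounded below
  obtain ⟨θ1, hθ1⟩ := exists_Ioi_pos P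
  have hcpos' : 0 < Mfun ψ P θ1 := pos_M hρ hψ hm hP2 hθ1
  have hev2 : ∀ᶠ θ in atBot, Gfun ψ P θ < α := by
    have h1 : ∀ᶠ θ in atBot, Nfun ψ P θ < α * Mfun ψ P θ1 :=
      (lim_N_atBot hρ hψ hmono hm hP2).eventually_lt_const (by positivity)
    filter_upwards [h1, eventually_le_atBot θ1] with θ hN hθ
    have hcd : Mfun ψ P θ1 ≤ Dfun ψ P θ := D_lower_left hρ hψ hmono hm hP2 hθ
    rw [hGeq, div_lt_iff₀ (hD θ)]
    nlinarith [hD θ]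
  obtain ⟨b, hb⟩ := eventually_atBot.mp hev2
  have hbdd : BddBelow S := by
    refine ⟨b, fun θ hθ => ?_⟩
    by_contra hlt
    exact absurd hθ (not_le.mpr (hb θ (le_of_lt (not_le.mp hlt))))
  -- conclusion
  have hθstar : MQuant ψ P α = sInf S := rfl
  have hmem : MQuant ψ P α ∈ S := by
    have hclosed : IsClosed S := isClosed_le continuous_const hGcont
    have := csInf_mem_closure hne hbdd
    rw [hclosed.closure_eq] at this
    exact this
  have hge : α ≤ Gfun ψ P (MQuant ψ P α) := hmem
  have hle : Gfun ψ P (MQuant ψ P α) ≤ α := by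
    set t := MQuant ψ P α with ht
    have hseq : Tendsto (fun n : ℕ => t - 1 / (n + 1)) atTop (nhds t) := by
      have := tendsto_one_div_add_atTop_nhds_zero_nat (𝕜 := ℝ)
      have h2 : Tendsto (fun n : ℕ => t - 1 / (n + 1)) atTop (nhds (t - 0)) :=
        tendsto_const_nhds.sub this
      simpa using h2
    refine le_of_tendsto ((hGcont.continuousAt.tendsto).comp hseq) ?_
    filter_upwards with n
    have hlt : t - 1 / (n + 1 : ℝ) < t := by
      have : (0:ℝ) < 1 / (n + 1) := by positivity
      linarith
    have hnotin : t - 1 / (n + 1 : ℝ) ∉ S := fun hin =>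
      absurd (csInf_le hbdd hin) (not_le.mpr hlt)
    exact le_of_lt (not_le.mp hnotin)
  exact ⟨hGcont.continuousAt, le_antisymm hle hge⟩
end
end

section
/- Let P ∈ 𝒫_d, let Z be a random d-vector with law P, and let μ_P = E[Z]. Then the expectile depth ED(z,P) is uniquely maximized at z = μ_P, and the maximal value is ED(μ_P,P) = 1/2; that is, ED(μ_P,P) = 1/2 and ED(z,P) < 1/2 for every z ≠ μ_P. -/
open MeasureTheory Set Filter
open scoped RealInnerProductSpace ENNReal

noncomputable section

/-- The directional expectile outlyingness
`e_z(u) = E[|u'(Z−z)|·𝟙[u'(Z−z) ≤ 0]] / E[|u'(Z−z)|]` for `Z ~ P`. -/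
def eOut {E : Type*} [NormedAddCommGroup E] [InnerProductSpace ℝ E] [MeasurableSpace E]
    (P : Measure E) (z u : E) : ℝ :=
  (∫ y, |⟪u, y - z⟫| * (if ⟪u, y - z⟫ ≤ 0 then 1 else 0) ∂P) / ∫ y, |⟪u, y - z⟫| ∂P

/-- The halfspace expectile depth `ED(z,P) = inf_{u ∈ S^{d−1}} e_z(u)`. -/
def EDepth {E : Type*} [NormedAddCommGroup E] [InnerProductSpace ℝ E] [MeasurableSpace E]
    (P : Measure E) (z : E) : ℝ :=
  ⨅ u : {u : E // ‖u‖ = 1}, eOut P z u.1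

/-- The C-support `C_P = {z : P[{y : u'y ≤ u'z}] > 0 for every unit u}`. -/
def Csupport {E : Type*} [NormedAddCommGroup E] [InnerProductSpace ℝ E] [MeasurableSpace E]
    (P : Measure E) : Set E :=
  {z | ∀ u : E, ‖u‖ = 1 → 0 < P {y | ⟪u, y⟫ ≤ ⟪u, z⟫}}

lemma eOut_nonneg {E : Type*} [NormedAddCommGroup E] [InnerProductSpace ℝ E] [MeasurableSpace E]
    (P : Measure E) (z u : E) : 0 ≤ eOut P z u := by
  apply div_nonneg
  · exact integral_nonneg fun y => mul_nonneg (abs_nonneg _) (by split <;> norm_num)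
  · exact integral_nonneg fun y => abs_nonneg _

lemma eOut_key {E : Type*} [NormedAddCommGroup E] [InnerProductSpace ℝ E] [CompleteSpace E]
    [MeasurableSpace E] [OpensMeasurableSpace E]
    (P : Measure E) [IsProbabilityMeasure P] (z u : E)
    (hmom : Integrable (fun y : E => y) P)
    (hne : P {y : E | ⟪u, y⟫ = ⟪u, z⟫} < 1) :
    ∃ A B : ℝ, eOut P z u = B / (A + B) ∧ 0 ≤ B ∧ 0 < A + B ∧
      A - B = ⟪u, (∫ y, y ∂P) - z⟫ := by
  set f : E → ℝ := fun y => ⟪u, y - z⟫ with hf_def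
  have hsub : Integrable (fun y : E => y - z) P := hmom.sub (integrable_const z)
  have hf : Integrable f P := (innerSL ℝ u).integrable_comp hsub
  have habs : (fun y => |f y|) = fun y => max (f y) 0 + max (-f y) 0 := by
    funext y
    rcases le_total (f y) 0 with h | h
    · rw [abs_of_nonpos h, max_eq_right h, max_eq_left (neg_nonneg.2 h)]; ring
    · rw [abs_of_nonneg h, max_eq_left h, max_eq_right (neg_nonpos.2 h)]; ring
  have hABsum : (∫ y, |f y| ∂P) = (∫ y, max (f y) 0 ∂P) + ∫ y, max (-f y) 0 ∂P := by
    rw [habs, integral_add hf.pos_part hf.neg_part]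
  refine ⟨∫ y, max (f y) 0 ∂P, ∫ y, max (-f y) 0 ∂P, ?_, ?_, ?_, ?_⟩
  · have h1 : (fun y => |f y| * (if f y ≤ 0 then 1 else 0)) = fun y => max (-f y) 0 := by
      funext y
      by_cases h : f y ≤ 0
      · rw [if_pos h, abs_of_nonpos h, max_eq_left (neg_nonneg.2 h)]; ring
      · rw [if_neg h, max_eq_right (neg_nonpos.2 (le_of_lt (not_le.1 h)))]; ring
    rw [eOut]
    show (∫ y, |f y| * (if f y ≤ 0 then (1:ℝ) else 0) ∂P) / (∫ y, |f y| ∂P) = _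
    rw [h1, hABsum]
  · exact integral_nonneg fun y => le_max_right _ _
  · rw [← hABsum]
    rw [integral_pos_iff_support_of_nonneg (fun y => abs_nonneg _) hf.abs]
    have hsupp : Function.support (fun y => |f y|) = {y : E | f y ≠ 0} := by
      ext y; simp [Function.mem_support, abs_eq_zero]
    rw [hsupp]
    by_contra h
    push_neg at h
    have h0 : P {y : E | f y ≠ 0} = 0 := le_antisymm h (zero_le)
    have hset : {y : E | f y = 0} = {y : E | ⟪u, y⟫ = ⟪u, z⟫} := by
      ext y; simp only [hf_def, Set.mem_setOf_eq, inner_sub_right, sub_eq_zero]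
    have : (1 : ℝ≥0∞) ≤ P {y : E | f y = 0} := by
      have hunion : (univ : Set E) ⊆ {y : E | f y = 0} ∪ {y : E | f y ≠ 0} := by
        intro y _
        by_cases h : f y = 0
        · exact Or.inl h
        · exact Or.inr h
      calc (1 : ℝ≥0∞) = P univ := measure_univ.symm
        _ ≤ P ({y : E | f y = 0} ∪ {y : E | f y ≠ 0}) := measure_mono hunion
        _ ≤ P {y : E | f y = 0} + P {y : E | f y ≠ 0} := measure_union_le _ _
        _ = P {y : E | f y = 0} := by rw [h0, add_zero]
    rw [hset] at this
    exact absurd hne (not_lt.2 this)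
  · have h2 : (∫ y, max (f y) 0 ∂P) - ∫ y, max (-f y) 0 ∂P = ∫ y, f y ∂P := by
      rw [← integral_sub hf.pos_part hf.neg_part]
      congr 1
      funext y
      rcases le_total (f y) 0 with h | h
      · rw [max_eq_right h, max_eq_left (neg_nonneg.2 h)]; ring
      · rw [max_eq_left h, max_eq_right (neg_nonpos.2 h)]; ring
    rw [h2]
    have h3 : ∫ y, f y ∂P = (innerSL ℝ u) (∫ y, y - z ∂P) :=
      (innerSL ℝ u).integral_comp_comm hsub
    have h4 : (∫ y, y - z ∂P) = (∫ y, y ∂P) - z := by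
      rw [integral_sub hmom (integrable_const z), integral_const, Measure.real, measure_univ,
        ENNReal.toReal_one, one_smul]
    rw [h3, h4]
    rfl

theorem stmt_14 {d : ℕ} (hd : 0 < d)
    (P : Measure (EuclideanSpace ℝ (Fin d))) [IsProbabilityMeasure P]
    (hmom : Integrable (fun y : EuclideanSpace ℝ (Fin d) => y) P)
    (hP1 : ∀ u : EuclideanSpace ℝ (Fin d), ‖u‖ = 1 → ∀ c : ℝ, P {z | ⟪u, z⟫ = c} < 1) :
    EDepth P (∫ y, y ∂P) = 1 / 2 ∧
    ∀ z : EuclideanSpace ℝ (Fin d), z ≠ ∫ y, y ∂P → EDepth P z < 1 / 2 := by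
  set μ : EuclideanSpace ℝ (Fin d) := ∫ y, y ∂P with hμ
  have hne : Nonempty {u : EuclideanSpace ℝ (Fin d) // ‖u‖ = 1} := by
    refine ⟨⟨EuclideanSpace.single ⟨0, hd⟩ 1, ?_⟩⟩
    rw [EuclideanSpace.norm_single]
    norm_num
  have hbdd : ∀ z : EuclideanSpace ℝ (Fin d),
      BddBelow (Set.range fun u : {u : EuclideanSpace ℝ (Fin d) // ‖u‖ = 1} =>
      eOut P z u.1) := fun z => ⟨0, by rintro x ⟨u, rfl⟩; exact eOut_nonneg P z u.1⟩
  constructor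
  · have hval : ∀ u : {u : EuclideanSpace ℝ (Fin d) // ‖u‖ = 1},
        eOut P μ u.1 = 1 / 2 := by
      rintro ⟨u, hu⟩
      obtain ⟨A, B, hE, hB, hAB, hdiff⟩ := eOut_key P μ u hmom (hP1 u hu _)
      have hABeq : A = B := by
        have : A - B = 0 := by rw [hdiff, sub_self, inner_zero_right]
        linarith
      rw [hE, hABeq]
      have hBpos : 0 < B := by linarith
      rw [div_eq_iff (by linarith)]
      ring
    rw [EDepth]
    rw [iInf_congr hval]
    exact ciInf_const
  · intro z hz
    have hvne : μ - z ≠ 0 := sub_ne_zero.2 (Ne.symm hz)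
    set v : EuclideanSpace ℝ (Fin d) := μ - z with hv
    set u : EuclideanSpace ℝ (Fin d) := ‖v‖⁻¹ • v with huv
    have hnu : ‖u‖ = 1 := by
      rw [huv, norm_smul, norm_inv, norm_norm, inv_mul_cancel₀ (norm_ne_zero_iff.2 hvne)]
    have hinner : ⟪u, μ - z⟫ = ‖v‖ := by
      rw [huv, ← hv, real_inner_smul_left, real_inner_self_eq_norm_sq]
      have : ‖v‖ ≠ 0 := norm_ne_zero_iff.2 hvne
      field_simp
    obtain ⟨A, B, hE, hB, hAB, hdiff⟩ := eOut_key P z u hmom (hP1 u hnu _)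
    have hBA : B < A := by
      have h1 : 0 < A - B := by
        rw [hdiff, hinner]
        exact norm_pos_iff.2 hvne
      linarith
    have hlt : eOut P z u < 1 / 2 := by
      rw [hE, div_lt_div_iff₀ hAB (by norm_num : (0:ℝ) < 2)]
      linarith
    calc EDepth P z ≤ eOut P z u := ciInf_le (hbdd z) ⟨u, hnu⟩
      _ < 1 / 2 := hlt
end
end

section
/- Fix P ∈ 𝒫_d with mean vector μ_P and fix u ∈ S^{d−1}. Let r_u(P) = sup{r > 0 : μ_P + r·u ∈ C_P} ∈ (0, +∞]. Then the map r ↦ ED(μ_P + r·u, P) is monotone strictly decreasing on [0, r_u(P)] (on [0,∞) if r_u(P) = +∞), and ED(μ_P + r·u, P) = 0 for every r ≥ r_u(P). -/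
open MeasureTheory Set Filter Topology
open scoped RealInnerProductSpace ENNReal

set_option maxHeartbeats 1000000
set_option linter.unusedSectionVars false

noncomputable section

namespace StmtAux

abbrev Euc (d : ℕ) := EuclideanSpace ℝ (Fin d)

variable {d : ℕ} {P : Measure (Euc d)} [IsProbabilityMeasure P]

lemma contInner (v : Euc d) : Continuous (fun y : Euc d => ⟪v, y⟫) :=
  continuous_const.inner continuous_id

lemma abs_ite_eq_max (c : ℝ) : |c| * (if c ≤ 0 then 1 else 0) = max (-c) 0 := by
  rcases le_or_gt c 0 with h | h
  · simp [h, abs_of_nonpos h, max_eq_left (neg_nonneg.2 h)]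
  · simp [not_le.2 h, max_eq_right (neg_nonpos.2 h.le)]

lemma intX (hmom : Integrable (fun y : Euc d => y) P) (v z : Euc d) :
    Integrable (fun y : Euc d => ⟪v, y - z⟫) P :=
  (ContinuousLinearMap.integrable_comp (innerSL ℝ v) (hmom.sub (integrable_const z)))

lemma intMax (hmom : Integrable (fun y : Euc d => y) P) (v z : Euc d) :
    Integrable (fun y : Euc d => max (-⟪v, y - z⟫) 0) P :=
  (intX hmom v z).neg.pos_part

lemma intG (hmom : Integrable (fun y : Euc d => y) P) (w μ : Euc d) (c : ℝ) :
    Integrable (fun y : Euc d => max (c - ⟪w, y - μ⟫) 0) P :=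
  ((integrable_const c).sub (intX hmom w μ)).pos_part

lemma meanX (hmom : Integrable (fun y : Euc d => y) P) (v z : Euc d) :
    ∫ y, ⟪v, y - z⟫ ∂P = ⟪v, (∫ y, y ∂P) - z⟫ := by
  have h : Integrable (fun y : Euc d => y - z) P := hmom.sub (integrable_const z)
  have h2 := integral_inner (𝕜 := ℝ) h v
  rw [h2, integral_sub hmom (integrable_const z), integral_const]
  simp

/-- denominator positive -/
lemma Dpos (hP1 : ∀ u : Euc d, ‖u‖ = 1 → ∀ c : ℝ, P {z | ⟪u, z⟫ = c} < 1)
    (hmom : Integrable (fun y : Euc d => y) P) {v : Euc d} (hv : ‖v‖ = 1) (z : Euc d) :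
    0 < ∫ y, |⟪v, y - z⟫| ∂P := by
  rcases lt_or_ge 0 (∫ y, |⟪v, y - z⟫| ∂P) with h | h
  · exact h
  have h0 : ∫ y, |⟪v, y - z⟫| ∂P = 0 :=
    le_antisymm h (integral_nonneg fun y => abs_nonneg _)
  have hae := (integral_eq_zero_iff_of_nonneg (fun y => abs_nonneg _) (intX hmom v z).abs).1 h0
  have hae2 : ∀ᵐ y ∂P, ⟪v, y⟫ = ⟪v, z⟫ := by
    filter_upwards [hae] with y hy
    have : |⟪v, y - z⟫| = 0 := hy
    have := abs_eq_zero.1 this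
    rw [inner_sub_right] at this
    linarith
  have : P {y : Euc d | ⟪v, y⟫ = ⟪v, z⟫} = 1 := by
    rw [← measure_univ (μ := P)]
    exact measure_congr (by
      filter_upwards [hae2] with y hy
      simp only [eq_iff_iff]
      constructor <;> intro _ <;> trivial)
  exact absurd this (hP1 v hv ⟪v, z⟫).ne

/-- numerator rewrite -/
lemma num_eq (v z : Euc d) :
    (∫ y, |⟪v, y - z⟫| * (if ⟪v, y - z⟫ ≤ 0 then 1 else 0) ∂P)
      = ∫ y, max (-⟪v, y - z⟫) 0 ∂P :=
  integral_congr_ae (Eventually.of_forall fun y => abs_ite_eq_max _)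

/-- denominator identity -/
lemma Did (hmom : Integrable (fun y : Euc d => y) P) (v z : Euc d) :
    ∫ y, |⟪v, y - z⟫| ∂P
      = 2 * ∫ y, max (-⟪v, y - z⟫) 0 ∂P + ⟪v, (∫ y, y ∂P) - z⟫ := by
  have hpt : ∀ y : Euc d, |⟪v, y - z⟫| = 2 * max (-⟪v, y - z⟫) 0 + ⟪v, y - z⟫ := by
    intro y
    rcases le_or_gt (⟪v, y - z⟫ : ℝ) 0 with h | h
    · rw [abs_of_nonpos h, max_eq_left (neg_nonneg.2 h)]; ring
    · rw [abs_of_pos h, max_eq_right (neg_nonpos.2 h.le)]; ring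
  calc ∫ y, |⟪v, y - z⟫| ∂P
      = ∫ y, (2 * max (-⟪v, y - z⟫) 0 + ⟪v, y - z⟫) ∂P :=
        integral_congr_ae (Eventually.of_forall fun y => hpt y)
    _ = 2 * ∫ y, max (-⟪v, y - z⟫) 0 ∂P + ⟪v, (∫ y, y ∂P) - z⟫ := by
        rw [integral_add ((intMax hmom v z).const_mul 2) (intX hmom v z),
          integral_const_mul, meanX hmom v z]

lemma eOut_eq (hmom : Integrable (fun y : Euc d => y) P) (v z : Euc d) :
    eOut P z v = (∫ y, max (-⟪v, y - z⟫) 0 ∂P)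
      / (2 * ∫ y, max (-⟪v, y - z⟫) 0 ∂P + ⟪v, (∫ y, y ∂P) - z⟫) := by
  rw [eOut, num_eq, Did hmom]

lemma eOut_nonneg (v z : Euc d) : 0 ≤ eOut P z v :=
  div_nonneg (integral_nonneg fun y => by
    rw [abs_ite_eq_max]; exact le_max_right _ _) (integral_nonneg fun y => abs_nonneg _)

lemma EDepth_nonneg {w : Euc d} (hw : ‖w‖ = 1) (z : Euc d) : 0 ≤ EDepth P z := by
  have : Nonempty {u : Euc d // ‖u‖ = 1} := ⟨⟨w, hw⟩⟩
  rw [EDepth]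
  exact le_ciInf fun i => eOut_nonneg i.1 z

lemma EDepth_le (v z : Euc d) (hv : ‖v‖ = 1) : EDepth P z ≤ eOut P z v := by
  have hb : BddBelow (Set.range (fun i : {u : Euc d // ‖u‖ = 1} => eOut P z i.1)) := by
    refine ⟨0, ?_⟩
    rintro x ⟨i, rfl⟩
    exact eOut_nonneg i.1 z
  rw [EDepth]
  exact ciInf_le hb ⟨v, hv⟩

lemma EDepth_ge (z : Euc d) {c : ℝ} (hc : ∀ v : Euc d, ‖v‖ = 1 → c ≤ eOut P z v)
    {w : Euc d} (hw : ‖w‖ = 1) : c ≤ EDepth P z := by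
  have : Nonempty {u : Euc d // ‖u‖ = 1} := ⟨⟨w, hw⟩⟩
  rw [EDepth]
  exact le_ciInf fun i => hc i.1 i.2

/-- positivity of numerator from positive mass of the open halfspace -/
lemma num_pos (hmom : Integrable (fun y : Euc d => y) P) (w z : Euc d)
    (h : 0 < P {y : Euc d | ⟪w, y⟫ < ⟪w, z⟫}) :
    0 < ∫ y, max (-⟪w, y - z⟫) 0 ∂P := by
  refine (integral_pos_iff_support_of_nonneg (fun y => le_max_right _ _)
    (intMax hmom w z)).2 ?_
  refine lt_of_lt_of_le h (measure_mono ?_)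
  intro y hy
  have hy' : (⟪w, y - z⟫ : ℝ) < 0 := by
    rw [inner_sub_right]; exact sub_neg.2 hy
  have : (0:ℝ) < max (-⟪w, y - z⟫) 0 := lt_max_of_lt_left (by linarith)
  exact this.ne'

/-- key strict inequality -/
lemma phi_lemma (hmom : Integrable (fun y : Euc d => y) P) (w μ : Euc d)
    {c1 c2 : ℝ} (h12 : c1 < c2) (h2 : c2 ≤ 0)
    (hpos : 0 < P {y : Euc d | ⟪w, y - μ⟫ < c2}) :
    c1 * ∫ y, max (c2 - ⟪w, y - μ⟫) 0 ∂P < c2 * ∫ y, max (c1 - ⟪w, y - μ⟫) 0 ∂P := by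
  set X : Euc d → ℝ := fun y => ⟪w, y - μ⟫ with hX
  have hc1 : c1 < 0 := lt_of_lt_of_le h12 h2
  have hnn : ∀ x : ℝ, 0 ≤ c2 * max (c1 - x) 0 - c1 * max (c2 - x) 0 := by
    intro x
    rcases le_or_gt c2 x with h | h
    · rw [max_eq_right (by linarith), max_eq_right (by linarith)]; simp
    rcases le_or_gt c1 x with h' | h'
    · rw [max_eq_right (by linarith), max_eq_left (by linarith)]; nlinarith
    · rw [max_eq_left (by linarith), max_eq_left (by linarith)]; nlinarith
  have hsp : ∀ x : ℝ, x < c2 → 0 < c2 * max (c1 - x) 0 - c1 * max (c2 - x) 0 := by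
    intro x h
    rcases le_or_gt c1 x with h' | h'
    · rw [max_eq_right (by linarith), max_eq_left (by linarith)]; nlinarith
    · rw [max_eq_left (by linarith), max_eq_left (by linarith)]; nlinarith
  have hint : Integrable (fun y : Euc d =>
      c2 * max (c1 - X y) 0 - c1 * max (c2 - X y) 0) P :=
    ((intG hmom w μ c1).const_mul c2).sub ((intG hmom w μ c2).const_mul c1)
  have hkey : 0 < ∫ y, (c2 * max (c1 - X y) 0 - c1 * max (c2 - X y) 0) ∂P := by
    rw [integral_pos_iff_support_of_nonneg (fun y => hnn (X y)) hint]
    refine lt_of_lt_of_le hpos (measure_mono ?_)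
    intro y hy
    exact (hsp (X y) hy).ne'
  have hsub : ∫ y, (c2 * max (c1 - X y) 0 - c1 * max (c2 - X y) 0) ∂P
      = c2 * (∫ y, max (c1 - X y) 0 ∂P) - c1 * (∫ y, max (c2 - X y) 0 ∂P) := by
    rw [integral_sub ((intG hmom w μ c1).const_mul c2) ((intG hmom w μ c2).const_mul c1),
      integral_const_mul, integral_const_mul]
  rw [hsub] at hkey
  linarith

/-- Lipschitz-type bound for the directional integrals -/
lemma lip_int (hmom : Integrable (fun y : Euc d => y) P) (z : Euc d)
    (g : ℝ → ℝ) (hg : ∀ a b : ℝ, |g a - g b| ≤ |a - b|)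
    (hgint : ∀ v : Euc d, Integrable (fun y : Euc d => g ⟪v, y - z⟫) P)
    (v v' : Euc d) :
    |(∫ y, g ⟪v, y - z⟫ ∂P) - ∫ y, g ⟪v', y - z⟫ ∂P|
      ≤ ‖v - v'‖ * ∫ y, ‖y - z‖ ∂P := by
  have hnorm : Integrable (fun y : Euc d => ‖y - z‖) P := (hmom.sub (integrable_const z)).norm
  rw [← integral_sub (hgint v) (hgint v'), ← Real.norm_eq_abs]
  refine le_trans (norm_integral_le_integral_norm _) ?_
  rw [← integral_const_mul]
  refine integral_mono ((hgint v).sub (hgint v')).norm (hnorm.const_mul _) ?_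
  intro y
  simp only [Real.norm_eq_abs]
  refine le_trans (hg _ _) ?_
  rw [← inner_sub_left]
  exact (abs_real_inner_le_norm _ _)

lemma cont_int (hmom : Integrable (fun y : Euc d => y) P) (z : Euc d)
    (g : ℝ → ℝ) (hg : ∀ a b : ℝ, |g a - g b| ≤ |a - b|)
    (hgint : ∀ v : Euc d, Integrable (fun y : Euc d => g ⟪v, y - z⟫) P) :
    Continuous (fun v : Euc d => ∫ y, g ⟪v, y - z⟫ ∂P) := by
  set M : ℝ := ∫ y, ‖y - z‖ ∂P with hM
  have hM0 : 0 ≤ M := integral_nonneg fun y => norm_nonneg _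
  refine (LipschitzWith.of_dist_le_mul (K := M.toNNReal) ?_).continuous
  intro v v'
  rw [Real.dist_eq, dist_eq_norm]
  refine le_trans (lip_int hmom z g hg hgint v v') ?_
  rw [Real.coe_toNNReal _ hM0]
  ring_nf
  exact le_refl _

/-- existence of a minimizing direction -/
lemma exists_min (hP1 : ∀ u : Euc d, ‖u‖ = 1 → ∀ c : ℝ, P {z | ⟪u, z⟫ = c} < 1)
    (hmom : Integrable (fun y : Euc d => y) P) (z : Euc d)
    {u : Euc d} (hu : ‖u‖ = 1) :
    ∃ w : Euc d, ‖w‖ = 1 ∧ ∀ v : Euc d, ‖v‖ = 1 → eOut P z w ≤ eOut P z v := by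
  set N : Euc d → ℝ := fun v => ∫ y, max (-⟪v, y - z⟫) 0 ∂P with hN
  set D : Euc d → ℝ := fun v => ∫ y, |⟪v, y - z⟫| ∂P with hD
  have hNcont : Continuous N := by
    refine cont_int hmom z (fun t => max (-t) 0) ?_ (fun v => intMax hmom v z)
    intro a b
    have := abs_max_sub_max_le_abs (-a) (-b) 0
    calc |max (-a) 0 - max (-b) 0| ≤ |(-a) - (-b)| := this
      _ = |a - b| := by rw [← abs_neg]; ring_nf
  have hDcont : Continuous D := by
    refine cont_int hmom z (fun t => |t|) ?_ (fun v => (intX hmom v z).abs)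
    intro a b
    exact abs_abs_sub_abs_le_abs_sub a b
  have hFcont : ContinuousOn (fun v => N v / D v) (Metric.sphere (0 : Euc d) 1) := by
    refine (hNcont.continuousOn).div (hDcont.continuousOn) ?_
    intro x hx
    exact (Dpos hP1 hmom (mem_sphere_zero_iff_norm.1 hx) z).ne'
  obtain ⟨w, hwS, hmin⟩ := (isCompact_sphere (0 : Euc d) 1).exists_isMinOn
    ⟨u, mem_sphere_zero_iff_norm.2 hu⟩ hFcont
  refine ⟨w, mem_sphere_zero_iff_norm.1 hwS, ?_⟩
  intro v hv
  have h1 : eOut P z w = N w / D w := by rw [eOut, num_eq]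
  have h2 : eOut P z v = N v / D v := by rw [eOut, num_eq]
  rw [h1, h2]
  exact hmin (mem_sphere_zero_iff_norm.2 hv)

/-- from an "open C-support" point one can take a small step in any fixed direction -/
lemma exists_step (u : Euc d) (hu : ‖u‖ = 1) (z : Euc d)
    (hO : ∀ v : Euc d, ‖v‖ = 1 → 0 < P {y | ⟪v, y⟫ < ⟪v, z⟫}) :
    ∃ s : ℝ, 0 < s ∧ ∀ v : Euc d, ‖v‖ = 1 →
      0 < P {y | ⟪v, y⟫ ≤ ⟪v, z + s • u⟫} := by
  by_contra hcon
  push_neg at hcon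
  have hc : ∀ n : ℕ, ∃ v : Euc d, ‖v‖ = 1 ∧
      P {y | ⟪v, y⟫ ≤ ⟪v, z + (1 / (n + 1) : ℝ) • u⟫} = 0 := by
    intro n
    obtain ⟨v, hv, hle⟩ := hcon (1 / (n + 1) : ℝ) (by positivity)
    exact ⟨v, hv, le_antisymm hle zero_le⟩
  choose v hv hnull using hc
  have hvS : ∀ n, v n ∈ Metric.sphere (0 : Euc d) 1 := fun n =>
    mem_sphere_zero_iff_norm.2 (hv n)
  obtain ⟨w, hwS, φ, hφ, hconv⟩ :=
    (isCompact_sphere (0 : Euc d) 1).tendsto_subseq hvS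
  have hw : ‖w‖ = 1 := mem_sphere_zero_iff_norm.1 hwS
  have hincl : {y : Euc d | ⟪w, y⟫ < ⟪w, z⟫} ⊆
      ⋃ N : ℕ, ⋂ k : ℕ, ⋂ _ : N ≤ k,
        {y : Euc d | ⟪v (φ k), y⟫ ≤ ⟪v (φ k), z + (1 / (φ k + 1) : ℝ) • u⟫} := by
    intro y hy
    have hδ : (⟪w, y - z⟫ : ℝ) < 0 := by
      rw [inner_sub_right]; exact sub_neg.2 hy
    set δ := (⟪w, y - z⟫ : ℝ)
    have htend : Tendsto (fun k => (⟪v (φ k), y - z⟫ : ℝ)) atTop (𝓝 δ) := by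
      have hcont : Continuous (fun x : Euc d => (⟪x, y - z⟫ : ℝ)) :=
        continuous_id.inner continuous_const
      exact (hcont.tendsto w).comp hconv
    have h1 : ∀ᶠ k in atTop, (⟪v (φ k), y - z⟫ : ℝ) < δ / 2 :=
      htend.eventually_lt_const (by linarith)
    have h2 : ∀ᶠ k in atTop, (1 / ((φ k : ℝ) + 1)) < -δ / 2 := by
      have : Tendsto (fun k : ℕ => (1 / ((φ k : ℝ) + 1))) atTop (𝓝 0) := by
        have h0 : Tendsto (fun n : ℕ => (1 / ((n : ℝ) + 1))) atTop (𝓝 0) :=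
          tendsto_one_div_add_atTop_nhds_zero_nat
        exact h0.comp (hφ.tendsto_atTop)
      exact this.eventually_lt_const (by linarith)
    have h3 : ∀ᶠ k in atTop, y ∈
        {y : Euc d | ⟪v (φ k), y⟫ ≤ ⟪v (φ k), z + (1 / (φ k + 1) : ℝ) • u⟫} := by
      filter_upwards [h1, h2] with k hk1 hk2
      have hbound : -(1 : ℝ) ≤ ⟪v (φ k), u⟫ := by
        have := abs_real_inner_le_norm (v (φ k)) u
        rw [hv (φ k), hu, one_mul] at this
        linarith [(abs_le.1 this).1]
      have hpos : (0:ℝ) < 1 / ((φ k : ℝ) + 1) := by positivity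
      have : (⟪v (φ k), y - z⟫ : ℝ) ≤ (1 / ((φ k : ℝ) + 1)) * ⟪v (φ k), u⟫ := by
        nlinarith
      simp only [Set.mem_setOf_eq, inner_add_right, real_inner_smul_right]
      rw [inner_sub_right] at this
      linarith
    obtain ⟨N, hN⟩ := h3.exists_forall_of_atTop
    exact Set.mem_iUnion.2 ⟨N,
      Set.mem_iInter.2 fun k => Set.mem_iInter.2 fun hk => hN k hk⟩
  have hnull2 : P {y : Euc d | ⟪w, y⟫ < ⟪w, z⟫} = 0 := by
    refine measure_mono_null hincl (measure_iUnion_null fun N => ?_)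
    refine measure_mono_null ?_ (hnull (φ N))
    intro y hy
    exact (Set.mem_iInter.1 (Set.mem_iInter.1 hy N)) (le_refl N)
  exact absurd hnull2 (hO w hw).ne'

/-- mass below any level at least the mean -/
lemma pos_lt_of_mean_le (hP1 : ∀ u : Euc d, ‖u‖ = 1 → ∀ c : ℝ, P {z | ⟪u, z⟫ = c} < 1)
    (hmom : Integrable (fun y : Euc d => y) P)
    {w : Euc d} (hw : ‖w‖ = 1) {c : ℝ} (hc : ⟪w, (∫ y, y ∂P)⟫ ≤ c) :
    0 < P {y : Euc d | ⟪w, y⟫ < c} := by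
  rcases (zero_le : 0 ≤ P {y : Euc d | ⟪w, y⟫ < c}).lt_or_eq with h | h
  · exact h
  exfalso
  have hae : ∀ᵐ y ∂P, c ≤ ⟪w, y⟫ := by
    rw [ae_iff]
    convert h.symm using 2
    ext y
    simp [not_le]
  set f : Euc d → ℝ := fun y => ⟪w, y⟫ - c with hf
  have hfint : Integrable f P := by
    have h1 : Integrable (fun y : Euc d => ⟪w, y⟫) P :=
      (ContinuousLinearMap.integrable_comp (innerSL ℝ w) hmom)
    exact h1.sub (integrable_const c)
  have hfnn : 0 ≤ᵐ[P] f := by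
    filter_upwards [hae] with y hy
    show (0:ℝ) ≤ ⟪w, y⟫ - c
    linarith
  have hfint0 : ∫ y, f y ∂P ≤ 0 := by
    have h1 : Integrable (fun y : Euc d => ⟪w, y⟫) P :=
      (ContinuousLinearMap.integrable_comp (innerSL ℝ w) hmom)
    have : ∫ y, f y ∂P = ⟪w, (∫ y, y ∂P)⟫ - c := by
      rw [hf, integral_sub h1 (integrable_const c), integral_const,
        ← integral_inner (𝕜 := ℝ) hmom w]
      simp
    rw [this]
    linarith
  have hzero : ∫ y, f y ∂P = 0 :=
    le_antisymm hfint0 (integral_nonneg_of_ae hfnn)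
  have hae0 : f =ᵐ[P] 0 := (integral_eq_zero_iff_of_nonneg_ae hfnn hfint).1 hzero
  have h1 : P {y : Euc d | ⟪w, y⟫ = c} = 1 := by
    rw [← measure_univ (μ := P)]
    refine measure_congr ?_
    filter_upwards [hae0] with y hy
    have : ⟪w, y⟫ - c = 0 := hy
    simp only [eq_iff_iff]
    constructor <;> intro _
    · trivial
    · show ⟪w, y⟫ = c; linarith
  exact absurd h1 (hP1 w hw c).ne

end StmtAux



theorem stmt_15 {d : ℕ} (hd : 0 < d)
    (P : Measure (EuclideanSpace ℝ (Fin d))) [IsProbabilityMeasure P]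
    (hmom : Integrable (fun y : EuclideanSpace ℝ (Fin d) => y) P)
    (hP1 : ∀ u : EuclideanSpace ℝ (Fin d), ‖u‖ = 1 → ∀ c : ℝ, P {z | ⟪u, z⟫ = c} < 1)
    (u : EuclideanSpace ℝ (Fin d)) (hu : ‖u‖ = 1)
    (μP : EuclideanSpace ℝ (Fin d)) (hμP : μP = ∫ y, y ∂P)
    (ru : ℝ≥0∞)
    (hru : ru = ⨆ (s : ℝ) (_ : 0 < s ∧ μP + s • u ∈ Csupport P), ENNReal.ofReal s) :
    0 < ru ∧
    (∀ r s : ℝ, 0 ≤ r → r < s → ENNReal.ofReal s ≤ ru →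
      EDepth P (μP + s • u) < EDepth P (μP + r • u)) ∧
    (∀ r : ℝ, 0 ≤ r → ru ≤ ENNReal.ofReal r → EDepth P (μP + r • u) = 0) := by
  classical
  have hz : ∀ (w : EuclideanSpace ℝ (Fin d)) (t : ℝ),
      (⟪w, μP + t • u⟫ : ℝ) = ⟪w, μP⟫ + t * ⟪w, u⟫ := by
    intro w t; rw [inner_add_right, real_inner_smul_right]
  have hiz : ∀ (w : EuclideanSpace ℝ (Fin d)) (t : ℝ),
      (⟪w, (∫ y, y ∂P) - (μP + t • u)⟫ : ℝ) = -(t * ⟪w, u⟫) := by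
    intro w t
    rw [← hμP]
    have h : μP - (μP + t • u) = -(t • u) := by abel
    rw [h, inner_neg_right, real_inner_smul_right]
  -- translation of the numerator integrand
  have hNg : ∀ (w : EuclideanSpace ℝ (Fin d)) (t : ℝ),
      (∫ y, max (-⟪w, y - (μP + t • u)⟫) 0 ∂P)
        = ∫ y, max ((t * ⟪w, u⟫) - ⟪w, y - μP⟫) 0 ∂P := by
    intro w t
    refine integral_congr_ae (Eventually.of_forall fun y => ?_)
    have h : y - (μP + t • u) = (y - μP) - t • u := by abel
    show max (-⟪w, y - (μP + t • u)⟫) 0 = max ((t * ⟪w, u⟫) - ⟪w, y - μP⟫) 0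
    rw [h, inner_sub_right, real_inner_smul_right]
    congr 1
    ring
  have hDid : ∀ (w z : EuclideanSpace ℝ (Fin d)), ‖w‖ = 1 →
      0 < 2 * (∫ y, max (-⟪w, y - z⟫) 0 ∂P) + ⟪w, (∫ y, y ∂P) - z⟫ := by
    intro w z hw
    rw [← StmtAux.Did hmom w z]
    exact StmtAux.Dpos hP1 hmom hw z
  have hOmu : ∀ w : EuclideanSpace ℝ (Fin d), ‖w‖ = 1 →
      0 < P {y | ⟪w, y⟫ < ⟪w, μP⟫} := by
    intro w hw
    refine StmtAux.pos_lt_of_mean_le hP1 hmom hw ?_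
    rw [← hμP]
  have hle_ru : ∀ s : ℝ, 0 < s → (μP + s • u ∈ Csupport P) → ENNReal.ofReal s ≤ ru := by
    intro s hs hmem
    rw [hru]
    exact le_iSup_of_le s
      (le_iSup (fun _ : (0 < s ∧ μP + s • u ∈ Csupport P) => ENNReal.ofReal s) ⟨hs, hmem⟩)
  obtain ⟨s0, hs0, hstep0⟩ := StmtAux.exists_step u hu μP hOmu
  have hmem0 : μP + s0 • u ∈ Csupport P := fun v hv => hstep0 v hv
  have h1 : 0 < ru :=
    lt_of_lt_of_le (by simpa using ENNReal.ofReal_pos.2 hs0) (hle_ru s0 hs0 hmem0)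
  have hO_of_lt : ∀ t : ℝ, 0 ≤ t → ENNReal.ofReal t < ru →
      ∀ w : EuclideanSpace ℝ (Fin d), ‖w‖ = 1 →
        0 < P {y | ⟪w, y⟫ < ⟪w, μP + t • u⟫} := by
    intro t ht hlt w hw
    rw [hru, lt_iSup_iff] at hlt
    obtain ⟨s', hs'⟩ := hlt
    by_cases hp : 0 < s' ∧ μP + s' • u ∈ Csupport P
    swap
    · rw [iSup_neg hp] at hs'
      exact absurd hs' (by simp)
    rw [iSup_pos hp] at hs'
    have hts' : t < s' := by
      by_contra hcon
      push_neg at hcon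
      exact absurd (ENNReal.ofReal_le_ofReal hcon) (not_le.2 hs')
    rcases le_or_gt 0 (⟪w, u⟫ : ℝ) with ha | ha
    · refine StmtAux.pos_lt_of_mean_le hP1 hmom hw ?_
      rw [← hμP, hz w t]
      nlinarith
    · refine lt_of_lt_of_le (hp.2 w hw) (measure_mono ?_)
      intro y hy
      simp only [Set.mem_setOf_eq] at hy ⊢
      rw [hz w s'] at hy
      rw [hz w t]
      nlinarith
  refine ⟨h1, ?_, ?_⟩
  · -- strict monotonicity
    intro r s hr hrs hsru
    have hs_pos : 0 < s := lt_of_le_of_lt hr hrs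
    have hrru : ENNReal.ofReal r < ru :=
      lt_of_lt_of_le ((ENNReal.ofReal_lt_ofReal_iff hs_pos).2 hrs) hsru
    have hOr : ∀ w : EuclideanSpace ℝ (Fin d), ‖w‖ = 1 →
        0 < P {y | ⟪w, y⟫ < ⟪w, μP + r • u⟫} := hO_of_lt r hr hrru
    have hNr_pos : ∀ w : EuclideanSpace ℝ (Fin d), ‖w‖ = 1 →
        0 < ∫ y, max (-⟪w, y - (μP + r • u)⟫) 0 ∂P :=
      fun w hw => StmtAux.num_pos hmom w _ (hOr w hw)
    by_cases hcase : ∃ v : EuclideanSpace ℝ (Fin d), ‖v‖ = 1 ∧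
        (∫ y, max (-⟪v, y - (μP + s • u)⟫) 0 ∂P) ≤ 0
    · -- depth at z_s is zero while depth at z_r is positive
      obtain ⟨v, hv, hvle⟩ := hcase
      have hnum0 : ∫ y, max (-⟪v, y - (μP + s • u)⟫) 0 ∂P = 0 :=
        le_antisymm hvle (integral_nonneg fun y => le_max_right _ _)
      have heout0 : eOut P (μP + s • u) v = 0 := by
        rw [eOut, StmtAux.num_eq, hnum0, zero_div]
      have hEDs : EDepth P (μP + s • u) ≤ 0 :=
        heout0 ▸ StmtAux.EDepth_le v (μP + s • u) hv
      obtain ⟨w, hw, hmin⟩ := StmtAux.exists_min hP1 hmom (μP + r • u) hu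
      have hwpos : 0 < eOut P (μP + r • u) w := by
        rw [StmtAux.eOut_eq hmom]
        exact div_pos (hNr_pos w hw) (hDid w _ hw)
      have hEDr : 0 < EDepth P (μP + r • u) :=
        lt_of_lt_of_le hwpos (StmtAux.EDepth_ge _ (fun v' hv' => hmin v' hv') hw)
      linarith
    · push_neg at hcase
      -- find a good direction w
      have hkey : ∃ w : EuclideanSpace ℝ (Fin d), ‖w‖ = 1 ∧
          (∀ v : EuclideanSpace ℝ (Fin d), ‖v‖ = 1 →
            eOut P (μP + r • u) w ≤ eOut P (μP + r • u) v) ∧ (⟪w, u⟫ : ℝ) < 0 := by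
        rcases eq_or_lt_of_le hr with hr0 | hrpos
        · -- r = 0 : every direction has outlyingness 1/2
          have hreq : r = 0 := hr0.symm
          subst hreq
          have heq : ∀ v : EuclideanSpace ℝ (Fin d), ‖v‖ = 1 →
              eOut P (μP + (0:ℝ) • u) v = 1 / 2 := by
            intro v hv
            rw [StmtAux.eOut_eq hmom, hiz v 0]
            have hN := hNr_pos v hv
            rw [show (-(0 * (⟪v, u⟫ : ℝ))) = 0 by ring, add_zero]
            rw [div_eq_div_iff (by linarith) (by norm_num)]
            ring
          refine ⟨-u, by rw [norm_neg, hu], ?_, ?_⟩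
          · intro v hv
            rw [heq v hv, heq (-u) (by rw [norm_neg, hu])]
          · rw [inner_neg_left]
            have : (⟪u, u⟫ : ℝ) = 1 := by
              rw [real_inner_self_eq_norm_mul_norm, hu]; norm_num
            rw [this]; norm_num
        · -- r > 0 : the minimizer works
          obtain ⟨w, hw, hmin⟩ := StmtAux.exists_min hP1 hmom (μP + r • u) hu
          refine ⟨w, hw, hmin, ?_⟩
          by_contra haw
          push_neg at haw
          -- then eOut at w would be ≥ 1/2
          set N := ∫ y, max (-⟪w, y - (μP + r • u)⟫) 0 ∂P with hN
          have hNpos : 0 < N := hNr_pos w hw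
          have hD : 0 < 2 * N + ⟪w, (∫ y, y ∂P) - (μP + r • u)⟫ := hDid w _ hw
          have hwhalf : (1:ℝ) / 2 ≤ eOut P (μP + r • u) w := by
            rw [StmtAux.eOut_eq hmom, ← hN, le_div_iff₀ hD, hiz w r]
            nlinarith
          -- but the direction -u has outlyingness < 1/2
          set Nm := ∫ y, max (-⟪-u, y - (μP + r • u)⟫) 0 ∂P with hNm
          have hNmpos : 0 < Nm := hNr_pos (-u) (by rw [norm_neg, hu])
          have hium : (⟪-u, (∫ y, y ∂P) - (μP + r • u)⟫ : ℝ) = r := by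
            rw [hiz (-u) r, inner_neg_left]
            have : (⟪u, u⟫ : ℝ) = 1 := by
              rw [real_inner_self_eq_norm_mul_norm, hu]; norm_num
            rw [this]; ring
          have hDm : 0 < 2 * Nm + ⟪-u, (∫ y, y ∂P) - (μP + r • u)⟫ := hDid (-u) _ (by rw [norm_neg, hu])
          have hmuhalf : eOut P (μP + r • u) (-u) < 1 / 2 := by
            rw [StmtAux.eOut_eq hmom, ← hNm, div_lt_div_iff₀ hDm (by norm_num), hium]
            nlinarith
          have := hmin (-u) (by rw [norm_neg, hu])
          linarith
      obtain ⟨w, hw, hwmin, haw⟩ := hkey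
      set a : ℝ := ⟪w, u⟫ with ha
      set c1 : ℝ := s * a with hc1
      set c2 : ℝ := r * a with hc2
      set g1 : ℝ := ∫ y, max (c1 - ⟪w, y - μP⟫) 0 ∂P with hg1
      set g2 : ℝ := ∫ y, max (c2 - ⟪w, y - μP⟫) 0 ∂P with hg2
      have hc12 : c1 < c2 := by rw [hc1, hc2]; nlinarith
      have hc20 : c2 ≤ 0 := mul_nonpos_of_nonneg_of_nonpos hr haw.le
      have hg1pos : 0 < g1 := by
        have := hcase w hw
        rwa [hNg w s, ← hc1, ← hg1] at this
      have hg2pos : 0 < g2 := by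
        have := hNr_pos w hw
        rwa [hNg w r, ← hc2, ← hg2] at this
      have hsetP : 0 < P {y : EuclideanSpace ℝ (Fin d) | ⟪w, y - μP⟫ < c2} := by
        have hsets : {y : EuclideanSpace ℝ (Fin d) | ⟪w, y - μP⟫ < c2}
            = {y : EuclideanSpace ℝ (Fin d) | ⟪w, y⟫ < ⟪w, μP + r • u⟫} := by
          ext y
          simp only [Set.mem_setOf_eq, inner_sub_right, hz w r, ← hc2]
          constructor <;> intro h <;> linarith
        rw [hsets]
        exact hOr w hw
      have hphi := StmtAux.phi_lemma hmom w μP hc12 hc20 hsetP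
      rw [← hg1, ← hg2] at hphi
      have heOuts : eOut P (μP + s • u) w = g1 / (2 * g1 - c1) := by
        rw [StmtAux.eOut_eq hmom, hNg w s, ← hc1, ← hg1, hiz w s, ← hc1]
        ring_nf
      have heOutr : eOut P (μP + r • u) w = g2 / (2 * g2 - c2) := by
        rw [StmtAux.eOut_eq hmom, hNg w r, ← hc2, ← hg2, hiz w r, ← hc2]
        ring_nf
      have hd1 : 0 < 2 * g1 - c1 := by
        have : c1 < 0 := lt_of_lt_of_le hc12 hc20
        linarith
      have hd2 : 0 < 2 * g2 - c2 := by linarith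
      have hstrict : eOut P (μP + s • u) w < eOut P (μP + r • u) w := by
        rw [heOuts, heOutr, div_lt_div_iff₀ hd1 hd2]
        nlinarith
      have hEDr : EDepth P (μP + r • u) = eOut P (μP + r • u) w :=
        le_antisymm (StmtAux.EDepth_le w _ hw) (StmtAux.EDepth_ge _ hwmin hw)
      calc EDepth P (μP + s • u) ≤ eOut P (μP + s • u) w := StmtAux.EDepth_le w _ hw
        _ < eOut P (μP + r • u) w := hstrict
        _ = EDepth P (μP + r • u) := hEDr.symm
  · -- vanishing beyond ru
    intro r hr hrule
    by_cases hO : ∀ v : EuclideanSpace ℝ (Fin d), ‖v‖ = 1 →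
        0 < P {y | ⟪v, y⟫ < ⟪v, μP + r • u⟫}
    · exfalso
      obtain ⟨s, hs, hstep⟩ := StmtAux.exists_step u hu (μP + r • u) hO
      have hmem : μP + (r + s) • u ∈ Csupport P := by
        intro v hv
        have h2 := hstep v hv
        rwa [show μP + r • u + s • u = μP + (r + s) • u by rw [add_smul]; abel] at h2
      have h3 := hle_ru (r + s) (by linarith) hmem
      have h4 : ENNReal.ofReal r < ENNReal.ofReal (r + s) :=
        (ENNReal.ofReal_lt_ofReal_iff (by linarith)).2 (by linarith)
      exact absurd (le_trans h3 hrule) h4.not_ge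
    · push_neg at hO
      obtain ⟨v, hv, hvle⟩ := hO
      have hnull : P {y : EuclideanSpace ℝ (Fin d) | ⟪v, y⟫ < ⟪v, μP + r • u⟫} = 0 :=
        le_antisymm hvle zero_le
      have hae : ∀ᵐ y ∂P, (⟪v, μP + r • u⟫ : ℝ) ≤ ⟪v, y⟫ := by
        rw [ae_iff]
        convert hnull using 2
        ext y
        simp [not_le]
      have hnum0 : ∫ y, max (-⟪v, y - (μP + r • u)⟫) 0 ∂P = 0 := by
        refine integral_eq_zero_of_ae ?_
        filter_upwards [hae] with y hy
        have : (⟪v, y - (μP + r • u)⟫ : ℝ) ≥ 0 := by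
          rw [inner_sub_right]; linarith
        show max (-⟪v, y - (μP + r • u)⟫) 0 = 0
        rw [max_eq_right (by linarith)]
      have heout0 : eOut P (μP + r • u) v = 0 := by
        rw [eOut, StmtAux.num_eq, hnum0, zero_div]
      exact le_antisymm (heout0 ▸ StmtAux.EDepth_le v _ hv)
        (StmtAux.EDepth_nonneg hu _)
end
end

section
/- Fix P ∈ 𝒫_d. Then (i) the map z ↦ ED(z,P) is uniformly continuous on ℝ^d; (ii) when d = 1, the map z ↦ ED(z,P) is left-differentiable and right-differentiable at every point of ℝ. -/
open MeasureTheory Set Filter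
open Topology
open scoped RealInnerProductSpace ENNReal

noncomputable section

private lemma ite_abs_eq_max (r : ℝ) : |r| * (if r ≤ 0 then (1:ℝ) else 0) = max (-r) 0 := by
  rcases le_or_gt r 0 with h | h
  · rw [if_pos h, mul_one, abs_of_nonpos h, max_eq_left (neg_nonneg.mpr h)]
  · rw [if_neg (not_le.mpr h), mul_zero, max_eq_right (neg_nonpos.mpr h.le)]

private lemma abs_eq_max_add (r : ℝ) : |r| = max r 0 + max (-r) 0 := by
  rcases le_total r 0 with h | h
  · rw [abs_of_nonpos h, max_eq_right h, max_eq_left (neg_nonneg.mpr h), zero_add]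
  · rw [abs_of_nonneg h, max_eq_left h, max_eq_right (neg_nonpos.mpr h), add_zero]

private lemma max_add_zero_le (p q : ℝ) : max (p + q) 0 ≤ max p 0 + max q 0 :=
  max_le (add_le_add (le_max_left _ _) (le_max_left _ _))
    (add_nonneg (le_max_right _ _) (le_max_right _ _))

private lemma min_div_neg (a b c : ℝ) (hc : c < 0) : min a b / c = max (a / c) (b / c) := by
  rcases le_total a b with h | h
  · rw [min_eq_left h, max_eq_left ((div_le_div_right_of_neg hc).mpr h)]
  · rw [min_eq_right h, max_eq_right ((div_le_div_right_of_neg hc).mpr h)]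

private lemma convexOn_integral_pos_part {Q : Measure ℝ} [IsProbabilityMeasure Q]
    (hQmom : Integrable (fun y : ℝ => y) Q) (s : ℝ) :
    ConvexOn ℝ univ (fun t : ℝ => ∫ y, max (s * (t - y)) 0 ∂Q) := by
  have hint : ∀ t : ℝ, Integrable (fun y => max (s * (t - y)) 0) Q := fun t => by
    have : Integrable (fun y : ℝ => s * (t - y)) Q :=
      ((integrable_const t).sub hQmom).const_mul s
    exact this.pos_part
  refine ⟨convex_univ, fun p _ q _ a b ha hb hab => ?_⟩
  simp only [smul_eq_mul]
  have key : ∀ w : ℝ, max (s * ((a * p + b * q) - w)) 0 ≤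
      a * max (s * (p - w)) 0 + b * max (s * (q - w)) 0 := by
    intro w
    have h1 : s * ((a * p + b * q) - w) = a * (s * (p - w)) + b * (s * (q - w)) := by
      linear_combination s * w * hab
    rw [h1]
    calc max (a * (s * (p - w)) + b * (s * (q - w))) 0
        ≤ max (a * (s * (p - w))) 0 + max (b * (s * (q - w))) 0 := max_add_zero_le _ _
      _ = a * max (s * (p - w)) 0 + b * max (s * (q - w)) 0 := by
          rw [mul_max_of_nonneg _ _ ha, mul_max_of_nonneg _ _ hb, mul_zero, mul_zero]
  calc (∫ y, max (s * ((a * p + b * q) - y)) 0 ∂Q)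
      ≤ ∫ y, (a * max (s * (p - y)) 0 + b * max (s * (q - y)) 0) ∂Q :=
        integral_mono (hint _) (((hint p).const_mul a).add ((hint q).const_mul b)) key
    _ = a * (∫ y, max (s * (p - y)) 0 ∂Q) + b * (∫ y, max (s * (q - y)) 0 ∂Q) := by
        rw [integral_add ((hint p).const_mul a) ((hint q).const_mul b),
          integral_const_mul, integral_const_mul]

private lemma convexOn_exists_deriv_Ioi {f : ℝ → ℝ} (hf : ConvexOn ℝ univ f) (z : ℝ) :
    ∃ L, HasDerivWithinAt f L (Ioi z) z := by
  have hmono : MonotoneOn (slope f z) (univ \ {z}) := hf.slope_mono (mem_univ z)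
  have hsub : Ioi z ⊆ univ \ {z} := fun t ht => ⟨trivial, by simpa using ne_of_gt ht⟩
  have hmono' : MonotoneOn (slope f z) (Ioi z) := hmono.mono hsub
  have hbdd : BddBelow (slope f z '' Ioi z) := by
    refine ⟨slope f z (z - 1), ?_⟩
    rintro _ ⟨t, ht, rfl⟩
    exact hmono ⟨trivial, by norm_num⟩ (hsub ht) (by linarith [mem_Ioi.mp ht])
  refine ⟨sInf (slope f z '' Ioi z), ?_⟩
  rw [hasDerivWithinAt_iff_tendsto_slope, diff_singleton_eq_self (by simp)]
  exact hmono'.tendsto_nhdsGT hbdd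

private lemma convexOn_exists_deriv_Iio {f : ℝ → ℝ} (hf : ConvexOn ℝ univ f) (z : ℝ) :
    ∃ L, HasDerivWithinAt f L (Iio z) z := by
  have hmono : MonotoneOn (slope f z) (univ \ {z}) := hf.slope_mono (mem_univ z)
  have hsub : Iio z ⊆ univ \ {z} := fun t ht => ⟨trivial, by simpa using ne_of_lt ht⟩
  have hmono' : MonotoneOn (slope f z) (Iio z) := hmono.mono hsub
  have hbdd : BddAbove (slope f z '' Iio z) := by
    refine ⟨slope f z (z + 1), ?_⟩
    rintro _ ⟨t, ht, rfl⟩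
    exact hmono (hsub ht) ⟨trivial, by norm_num⟩ (by linarith [mem_Iio.mp ht])
  refine ⟨sSup (slope f z '' Iio z), ?_⟩
  rw [hasDerivWithinAt_iff_tendsto_slope, diff_singleton_eq_self (by simp)]
  exact hmono'.tendsto_nhdsLT hbdd

private lemma exists_min_deriv_Ioi {f g : ℝ → ℝ} {z Lf Lg : ℝ}
    (hf : HasDerivWithinAt f Lf (Ioi z) z) (hg : HasDerivWithinAt g Lg (Ioi z) z) :
    ∃ L, HasDerivWithinAt (fun t => min (f t) (g t)) L (Ioi z) z := by
  rcases lt_trichotomy (f z) (g z) with h | h | h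
  · refine ⟨Lf, hf.congr_of_eventuallyEq ?_ (min_eq_left h.le)⟩
    have h2 : Tendsto (fun t => g t - f t) (𝓝[Ioi z] z) (𝓝 (g z - f z)) :=
      hg.continuousWithinAt.sub hf.continuousWithinAt
    filter_upwards [h2.eventually (eventually_gt_nhds (sub_pos.mpr h))] with t ht
    exact min_eq_left (sub_pos.mp ht).le
  · refine ⟨min Lf Lg, ?_⟩
    rw [hasDerivWithinAt_iff_tendsto_slope, diff_singleton_eq_self (by simp)] at hf hg ⊢
    refine Tendsto.congr' ?_ (hf.min hg)
    filter_upwards [self_mem_nhdsWithin] with t ht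
    have htz : (0:ℝ) < t - z := sub_pos.mpr (mem_Ioi.mp ht)
    simp only [slope_def_field]
    rw [← h, min_self, min_div_div_right htz.le, min_sub_sub_right]
  · refine ⟨Lg, hg.congr_of_eventuallyEq ?_ (min_eq_right h.le)⟩
    have h2 : Tendsto (fun t => f t - g t) (𝓝[Ioi z] z) (𝓝 (f z - g z)) :=
      hf.continuousWithinAt.sub hg.continuousWithinAt
    filter_upwards [h2.eventually (eventually_gt_nhds (sub_pos.mpr h))] with t ht
    exact min_eq_right (sub_pos.mp ht).le

private lemma exists_min_deriv_Iio {f g : ℝ → ℝ} {z Lf Lg : ℝ}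
    (hf : HasDerivWithinAt f Lf (Iio z) z) (hg : HasDerivWithinAt g Lg (Iio z) z) :
    ∃ L, HasDerivWithinAt (fun t => min (f t) (g t)) L (Iio z) z := by
  rcases lt_trichotomy (f z) (g z) with h | h | h
  · refine ⟨Lf, hf.congr_of_eventuallyEq ?_ (min_eq_left h.le)⟩
    have h2 : Tendsto (fun t => g t - f t) (𝓝[Iio z] z) (𝓝 (g z - f z)) :=
      hg.continuousWithinAt.sub hf.continuousWithinAt
    filter_upwards [h2.eventually (eventually_gt_nhds (sub_pos.mpr h))] with t ht
    exact min_eq_left (sub_pos.mp ht).le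
  · refine ⟨max Lf Lg, ?_⟩
    rw [hasDerivWithinAt_iff_tendsto_slope, diff_singleton_eq_self (by simp)] at hf hg ⊢
    refine Tendsto.congr' ?_ (hf.max hg)
    filter_upwards [self_mem_nhdsWithin] with t ht
    have htz : t - z < 0 := sub_neg.mpr (mem_Iio.mp ht)
    simp only [slope_def_field]
    rw [← h, min_self, ← min_sub_sub_right, min_div_neg _ _ _ htz]
  · refine ⟨Lg, hg.congr_of_eventuallyEq ?_ (min_eq_right h.le)⟩
    have h2 : Tendsto (fun t => f t - g t) (𝓝[Iio z] z) (𝓝 (f z - g z)) :=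
      hf.continuousWithinAt.sub hg.continuousWithinAt
    filter_upwards [h2.eventually (eventually_gt_nhds (sub_pos.mpr h))] with t ht
    exact min_eq_right (sub_pos.mp ht).le


private lemma ite_abs_eq_max' (r : ℝ) : |r| * (if r ≤ 0 then (1:ℝ) else 0) = max (-r) 0 := by
  rcases le_or_gt r 0 with h | h
  · rw [if_pos h, mul_one, abs_of_nonpos h, max_eq_left (neg_nonneg.mpr h)]
  · rw [if_neg (not_le.mpr h), mul_zero, max_eq_right (neg_nonpos.mpr h.le)]

private lemma ratio_diff_le' {a b a' b' r δ : ℝ} (hδ : 0 < δ) (ha' : 0 ≤ a') (hab : a ≤ b)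
    (hab' : a' ≤ b') (hb : δ ≤ b) (hb' : δ ≤ b')
    (hr1 : |a - a'| ≤ r) (hr2 : |b - b'| ≤ r) :
    |a / b - a' / b'| ≤ 2 / δ * r := by
  have hr0 : 0 ≤ r := (abs_nonneg _).trans hr1
  have hb0 : 0 < b := hδ.trans_le hb
  have hb'0 : 0 < b' := hδ.trans_le hb'
  have key : a / b - a' / b' = ((a - a') * b' + a' * (b' - b)) / (b * b') := by
    field_simp; ring
  rw [key, abs_div, abs_of_pos (mul_pos hb0 hb'0)]
  have h1 : |(a - a') * b' + a' * (b' - b)| ≤ 2 * r * b' := by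
    calc |(a - a') * b' + a' * (b' - b)| ≤ |(a - a') * b'| + |a' * (b' - b)| := abs_add_le _ _
      _ ≤ r * b' + b' * r := by
          refine add_le_add ?_ ?_
          · rw [abs_mul, abs_of_pos hb'0]
            exact mul_le_mul_of_nonneg_right hr1 hb'0.le
          · rw [abs_mul, abs_of_nonneg ha']
            exact mul_le_mul hab' (by rwa [abs_sub_comm]) (abs_nonneg _) hb'0.le
      _ = 2 * r * b' := by ring
  calc |(a - a') * b' + a' * (b' - b)| / (b * b') ≤ (2 * r * b') / (b * b') := by
        have := mul_pos hb0 hb'0; gcongr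
    _ = r * (2 / b) := by field_simp
    _ ≤ r * (2 / δ) :=
        mul_le_mul_of_nonneg_left (div_le_div_of_nonneg_left (by norm_num) hδ hb) hr0
    _ = 2 / δ * r := mul_comm _ _

private lemma integral_abs_diff_le' {α : Type*} [MeasurableSpace α] {μ : Measure α}
    [IsProbabilityMeasure μ] {f g : α → ℝ} (hf : Integrable f μ) (hg : Integrable g μ)
    {r : ℝ} (h : ∀ x, |f x - g x| ≤ r) : |∫ x, f x ∂μ - ∫ x, g x ∂μ| ≤ r := by
  rw [← integral_sub hf hg]
  calc |∫ x, (f x - g x) ∂μ| ≤ ∫ x, |f x - g x| ∂μ := by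
        simpa [Real.norm_eq_abs] using norm_integral_le_integral_norm (fun x => f x - g x) (μ := μ)
    _ ≤ ∫ _x, r ∂μ := integral_mono (hf.sub hg).abs (integrable_const r) h
    _ = r := by simp


private lemma partI {d : ℕ} (hd : 0 < d)
    (P : Measure (EuclideanSpace ℝ (Fin d))) [IsProbabilityMeasure P]
    (hmom : Integrable (fun y : EuclideanSpace ℝ (Fin d) => y) P)
    (hP1 : ∀ u : EuclideanSpace ℝ (Fin d), ‖u‖ = 1 → ∀ c : ℝ, P {z | ⟪u, z⟫ = c} < 1) :
    UniformContinuous (fun z => EDepth P z) := by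
  set E' := EuclideanSpace ℝ (Fin d)
  -- basic integrability
  have hinner : ∀ u : E', Integrable (fun y : E' => ⟪u, y⟫) P := fun u => by
    simpa using (innerSL ℝ u).integrable_comp hmom
  have hIabs : ∀ (z u : E'), Integrable (fun y : E' => |⟪u, y - z⟫|) P := fun z u => by
    refine (((hinner u).sub (integrable_const ⟪u, z⟫)).abs).congr (ae_of_all _ fun y => ?_)
    simp only [Pi.sub_apply]
    rw [inner_sub_right]
  have hImax : ∀ (z u : E'), Integrable (fun y : E' => max (⟪u, z - y⟫) 0) P := fun z u => by
    refine (((integrable_const ⟪u, z⟫).sub (hinner u)).pos_part).congr (ae_of_all _ fun y => ?_)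
    simp only [Pi.sub_apply]
    rw [inner_sub_right]
  -- numerator rewrite
  have hflip : ∀ (z u y : E'), ⟪u, z - y⟫ = -(⟪u, y - z⟫) := fun z u y => by
    rw [← inner_neg_right, neg_sub]
  have hnum : ∀ (z u : E'),
      (∫ y, |⟪u, y - z⟫| * (if ⟪u, y - z⟫ ≤ 0 then (1:ℝ) else 0) ∂P)
        = ∫ y, max (⟪u, z - y⟫) 0 ∂P := fun z u => by
    congr 1; funext y; rw [ite_abs_eq_max', ← hflip]
  -- bounds on numerator / denominator
  have hN0 : ∀ (z u : E'), (0:ℝ) ≤ ∫ y, max (⟪u, z - y⟫) 0 ∂P := fun z u =>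
    integral_nonneg fun y => le_max_right _ _
  have hNM : ∀ (z u : E'), (∫ y, max (⟪u, z - y⟫) 0 ∂P) ≤ ∫ y, |⟪u, y - z⟫| ∂P := fun z u => by
    refine integral_mono (hImax z u) (hIabs z u) fun y => ?_
    rw [hflip]
    exact max_le (neg_le_abs _) (abs_nonneg _)
  -- Lipschitz-in-z bounds
  have hNlip : ∀ (z z' u : E'), ‖u‖ = 1 →
      |(∫ y, max (⟪u, z - y⟫) 0 ∂P) - ∫ y, max (⟪u, z' - y⟫) 0 ∂P| ≤ ‖z - z'‖ := by
    intro z z' u hu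
    refine integral_abs_diff_le' (hImax z u) (hImax z' u) fun y => ?_
    calc |max (⟪u, z - y⟫) 0 - max (⟪u, z' - y⟫) 0| ≤ |⟪u, z - y⟫ - ⟪u, z' - y⟫| :=
          abs_max_sub_max_le_abs _ _ _
      _ = |⟪u, z - z'⟫| := by rw [← inner_sub_right, sub_sub_sub_cancel_right]
      _ ≤ ‖u‖ * ‖z - z'‖ := abs_real_inner_le_norm _ _
      _ = ‖z - z'‖ := by rw [hu, one_mul]
  have hMlip : ∀ (z z' u : E'), ‖u‖ = 1 →
      |(∫ y, |⟪u, y - z⟫| ∂P) - ∫ y, |⟪u, y - z'⟫| ∂P| ≤ ‖z - z'‖ := by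
    intro z z' u hu
    refine integral_abs_diff_le' (hIabs z u) (hIabs z' u) fun y => ?_
    calc |(|⟪u, y - z⟫| - |⟪u, y - z'⟫|)| ≤ |⟪u, y - z⟫ - ⟪u, y - z'⟫| :=
          abs_abs_sub_abs_le_abs_sub _ _
      _ = |⟪u, z' - z⟫| := by rw [← inner_sub_right, sub_sub_sub_cancel_left]
      _ ≤ ‖u‖ * ‖z' - z‖ := abs_real_inner_le_norm _ _
      _ = ‖z - z'‖ := by rw [hu, one_mul, norm_sub_rev]
  -- the function ψ on the sphere
  set ψ : E' → ℝ := fun u => ∫ p : E' × E', |⟪u, p.1 - p.2⟫| ∂(P.prod P) with hψ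
  have hψint : ∀ u : E', Integrable (fun p : E' × E' => |⟪u, p.1 - p.2⟫|) (P.prod P) := by
    intro u
    have f1 : Integrable (fun p : E' × E' => ⟪u, p.1⟫) (P.prod P) := by
      simpa using (hinner u).mul_prod (integrable_const (1:ℝ))
    have f2 : Integrable (fun p : E' × E' => ⟪u, p.2⟫) (P.prod P) := by
      simpa using (integrable_const (1:ℝ)).mul_prod (hinner u)
    refine ((f1.sub f2).abs).congr (ae_of_all _ fun p => ?_)
    simp only [Pi.sub_apply]
    rw [inner_sub_right]
  have hψpos : ∀ u : E', ‖u‖ = 1 → 0 < ψ u := by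
    intro u hu
    rcases lt_or_ge 0 (ψ u) with h | h
    · exact h
    exfalso
    have h0 : ψ u = 0 := le_antisymm h (integral_nonneg fun p => abs_nonneg _)
    have hae := (integral_eq_zero_iff_of_nonneg (fun p => abs_nonneg _) (hψint u)).mp h0
    have hae' : ∀ᵐ p ∂(P.prod P), ⟪u, p.1⟫ = ⟪u, p.2⟫ := by
      filter_upwards [hae] with p hp
      have h1 : |⟪u, p.1 - p.2⟫| = 0 := hp
      have h2 := abs_eq_zero.mp h1
      rw [inner_sub_right] at h2
      linarith
    have h2 := Measure.ae_ae_of_ae_prod hae'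
    obtain ⟨x₀, hx₀⟩ := h2.exists
    set c : ℝ := ⟪u, x₀⟫ with hc
    have hset : MeasurableSet {y : E' | ⟪u, y⟫ = c} := by
      have hcont : Continuous (fun y : E' => ⟪u, y⟫) := (innerSL ℝ u).continuous
      exact hcont.measurable (measurableSet_singleton c)
    have hco : P {y : E' | ⟪u, y⟫ = c}ᶜ = 0 := by
      have h3 := ae_iff.mp (hx₀.mono fun y hy => hy.symm)
      rw [Set.compl_setOf]
      exact h3
    have hone : P {y : E' | ⟪u, y⟫ = c} = 1 := (prob_compl_eq_zero_iff hset).mp hco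
    exact absurd hone (hP1 u hu c).ne
  -- continuity of ψ
  have hnormint : Integrable (fun p : E' × E' => ‖p.1 - p.2‖) (P.prod P) := by
    have f1 : Integrable (fun p : E' × E' => ‖p.1‖) (P.prod P) := by
      simpa using hmom.norm.mul_prod (integrable_const (1:ℝ))
    have f2 : Integrable (fun p : E' × E' => ‖p.2‖) (P.prod P) := by
      simpa using (integrable_const (1:ℝ)).mul_prod hmom.norm
    refine (f1.add f2).mono ?_ (ae_of_all _ fun p => ?_)
    · exact (continuous_fst.sub continuous_snd).norm.aestronglyMeasurable
    · simp only [Real.norm_eq_abs, abs_norm]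
      exact (abs_of_nonneg (norm_nonneg _)).le.trans ((norm_sub_le _ _).trans (le_abs_self _))
  set C : ℝ := ∫ p : E' × E', ‖p.1 - p.2‖ ∂(P.prod P) with hC
  have hψlip : ∀ u v : E', |ψ u - ψ v| ≤ C * ‖u - v‖ := by
    intro u v
    rw [hψ]
    simp only
    rw [← integral_sub (hψint u) (hψint v)]
    calc |∫ p : E' × E', (|⟪u, p.1 - p.2⟫| - |⟪v, p.1 - p.2⟫|) ∂(P.prod P)|
        ≤ ∫ p : E' × E', |(|⟪u, p.1 - p.2⟫| - |⟪v, p.1 - p.2⟫|)| ∂(P.prod P) := by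
          simpa [Real.norm_eq_abs] using norm_integral_le_integral_norm
            (fun p : E' × E' => |⟪u, p.1 - p.2⟫| - |⟪v, p.1 - p.2⟫|) (μ := P.prod P)
      _ ≤ ∫ p : E' × E', ‖u - v‖ * ‖p.1 - p.2‖ ∂(P.prod P) := by
          refine integral_mono ((hψint u).sub (hψint v)).abs (hnormint.const_mul _) fun p => ?_
          calc |(|⟪u, p.1 - p.2⟫| - |⟪v, p.1 - p.2⟫|)| ≤ |⟪u, p.1 - p.2⟫ - ⟪v, p.1 - p.2⟫| :=
                abs_abs_sub_abs_le_abs_sub _ _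
            _ = |⟪u - v, p.1 - p.2⟫| := by rw [inner_sub_left]
            _ ≤ ‖u - v‖ * ‖p.1 - p.2‖ := abs_real_inner_le_norm _ _
      _ = C * ‖u - v‖ := by rw [integral_const_mul, hC, mul_comm]
  have hC0 : 0 ≤ C := integral_nonneg fun p => norm_nonneg _
  have hψcont : Continuous ψ := by
    refine (LipschitzWith.of_dist_le_mul (K := C.toNNReal) fun u v => ?_).continuous
    rw [Real.dist_eq, dist_eq_norm]
    refine (hψlip u v).trans (mul_le_mul_of_nonneg_right ?_ (norm_nonneg _))
    rw [Real.coe_toNNReal _ hC0]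
  -- minimum of ψ over the sphere
  have hu₀ : ‖(EuclideanSpace.single (⟨0, hd⟩ : Fin d) (1:ℝ) : E')‖ = 1 := by
    rw [EuclideanSpace.norm_single]; norm_num
  obtain ⟨w, hw, hwmin'⟩ := (isCompact_sphere (0:E') 1).exists_isMinOn
    ⟨_, mem_sphere_zero_iff_norm.mpr hu₀⟩ hψcont.continuousOn
  have hwmin : ∀ u ∈ Metric.sphere (0:E') 1, ψ w ≤ ψ u := isMinOn_iff.mp hwmin'
  have hwu : ‖w‖ = 1 := mem_sphere_zero_iff_norm.mp hw
  set δ : ℝ := ψ w / 2 with hδ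
  have hδpos : 0 < δ := half_pos (hψpos w hwu)
  -- uniform lower bound on the denominator
  have hMδ : ∀ (z u : E'), ‖u‖ = 1 → δ ≤ ∫ y, |⟪u, y - z⟫| ∂P := by
    intro z u hu
    have f1 : Integrable (fun p : E' × E' => |⟪u, p.1 - z⟫|) (P.prod P) := by
      simpa using (hIabs z u).mul_prod (integrable_const (1:ℝ))
    have f2 : Integrable (fun p : E' × E' => |⟪u, p.2 - z⟫|) (P.prod P) := by
      simpa using (integrable_const (1:ℝ)).mul_prod (hIabs z u)
    have hψle : ψ u ≤ (∫ y, |⟪u, y - z⟫| ∂P) + ∫ y, |⟪u, y - z⟫| ∂P := by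
      calc ψ u ≤ ∫ p : E' × E', (|⟪u, p.1 - z⟫| + |⟪u, p.2 - z⟫|) ∂(P.prod P) := by
            refine integral_mono (hψint u) (f1.add f2) fun p => ?_
            have hsp : ⟪u, p.1 - p.2⟫ = ⟪u, p.1 - z⟫ - ⟪u, p.2 - z⟫ := by
              rw [← inner_sub_right, sub_sub_sub_cancel_right]
            rw [hsp]
            exact abs_sub _ _
        _ = (∫ y, |⟪u, y - z⟫| ∂P) + ∫ y, |⟪u, y - z⟫| ∂P := by
            rw [integral_add f1 f2]
            congr 1
            · simpa using integral_fun_fst (μ := P) (ν := P) (fun y : E' => |⟪u, y - z⟫|)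
            · simpa using integral_fun_snd (μ := P) (ν := P) (fun y : E' => |⟪u, y - z⟫|)
    have hwψ : ψ w ≤ ψ u := hwmin u (mem_sphere_zero_iff_norm.mpr hu)
    rw [hδ]; linarith
  -- Lipschitz property of eOut and EDepth
  have heOut : ∀ (z u : E'),
      eOut P z u = (∫ y, max (⟪u, z - y⟫) 0 ∂P) / (∫ y, |⟪u, y - z⟫| ∂P) := fun z u => by
    simp only [eOut]; rw [hnum]
  have hlip : ∀ (z z' u : E'), ‖u‖ = 1 → |eOut P z u - eOut P z' u| ≤ 2 / δ * ‖z - z'‖ := by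
    intro z z' u hu
    rw [heOut, heOut]
    exact ratio_diff_le' hδpos (hN0 z' u) (hNM z u) (hNM z' u) (hMδ z u hu) (hMδ z' u hu)
      (hNlip z z' u hu) (hMlip z z' u hu)
  have hbdd : ∀ z : E', BddBelow (range fun u : {u : E' // ‖u‖ = 1} => eOut P z u.1) := by
    intro z
    refine ⟨0, ?_⟩
    rintro _ ⟨u, rfl⟩
    show (0:ℝ) ≤ eOut P z u.1
    rw [heOut]
    exact div_nonneg (hN0 z u.1) (integral_nonneg fun y => abs_nonneg _)
  have hne : Nonempty {u : E' // ‖u‖ = 1} := ⟨⟨w, hwu⟩⟩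
  have key : ∀ z z' : E', EDepth P z ≤ EDepth P z' + 2 / δ * ‖z - z'‖ := by
    intro z z'
    have h2 : EDepth P z - 2 / δ * ‖z - z'‖ ≤ EDepth P z' := by
      simp only [EDepth]
      refine le_ciInf fun u => ?_
      have ha : (⨅ u : {u : E' // ‖u‖ = 1}, eOut P z u.1) ≤ eOut P z u.1 := ciInf_le (hbdd z) u
      have hb := abs_sub_le_iff.mp (hlip z z' u.1 u.2)
      linarith [hb.1, hb.2]
    linarith
  have habs2 : ∀ z z' : E', |EDepth P z - EDepth P z'| ≤ 2 / δ * ‖z - z'‖ := by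
    intro z z'
    refine abs_sub_le_iff.mpr ⟨?_, ?_⟩
    · have := key z z'; linarith
    · have := key z' z; rw [norm_sub_rev] at this; linarith
  refine (LipschitzWith.of_dist_le_mul (K := (2 / δ).toNNReal) fun z z' => ?_).uniformContinuous
  rw [Real.dist_eq, dist_eq_norm]
  refine (habs2 z z').trans (mul_le_mul_of_nonneg_right ?_ (norm_nonneg _))
  rw [Real.coe_toNNReal _ (by positivity)]

private lemma partII (Q : Measure ℝ) [IsProbabilityMeasure Q]
    (hQmom : Integrable (fun y : ℝ => y) Q) (hQ1 : ∀ c : ℝ, Q {c} < 1) (z : ℝ) :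
    (∃ L : ℝ, HasDerivWithinAt (fun t : ℝ => EDepth Q t) L (Set.Iio z) z) ∧
    (∃ L : ℝ, HasDerivWithinAt (fun t : ℝ => EDepth Q t) L (Set.Ioi z) z) := by
  set A : ℝ → ℝ := fun t => ∫ y, max (t - y) 0 ∂Q with hA
  set B : ℝ → ℝ := fun t => ∫ y, max (y - t) 0 ∂Q with hB
  have hIA : ∀ t : ℝ, Integrable (fun y => max (t - y) 0) Q := fun t =>
    ((integrable_const t).sub hQmom).pos_part
  have hIB : ∀ t : ℝ, Integrable (fun y => max (y - t) 0) Q := fun t =>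
    (hQmom.sub (integrable_const t)).pos_part
  have hAconv : ConvexOn ℝ univ A := by
    have := convexOn_integral_pos_part hQmom 1
    simp only [one_mul] at this
    rw [hA]; exact this
  have hBconv : ConvexOn ℝ univ B := by
    have := convexOn_integral_pos_part hQmom (-1)
    simp only [neg_one_mul, neg_sub] at this
    rw [hB]; exact this
  have hD : ∀ t : ℝ, (∫ y, |y - t| ∂Q) = B t + A t := by
    intro t
    rw [hB, hA]
    rw [← integral_add (hIB t) (hIA t)]
    congr 1; funext y; rw [abs_eq_max_add, neg_sub]
  have hDpos : ∀ t : ℝ, 0 < B t + A t := by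
    intro t
    by_contra h
    push_neg at h
    have h0 : (∫ y, |y - t| ∂Q) = 0 :=
      le_antisymm ((hD t).le.trans h) (integral_nonneg fun y => abs_nonneg _)
    have habs : Integrable (fun y : ℝ => |y - t|) Q := (hQmom.sub (integrable_const t)).abs
    have hae := (integral_eq_zero_iff_of_nonneg (fun y => abs_nonneg _) habs).mp h0
    have hone : ∀ᵐ y ∂Q, y = t := by
      filter_upwards [hae] with y hy
      exact sub_eq_zero.mp (abs_eq_zero.mp hy)
    have hcomp : Q {t}ᶜ = 0 := by
      have h2 := ae_iff.mp hone
      rw [Set.compl_singleton_eq]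
      simpa using h2
    have : Q {t} = 1 := (prob_compl_eq_zero_iff (measurableSet_singleton t)).mp hcomp
    exact absurd this (hQ1 t).ne
  have hnum1 : ∀ t : ℝ, (∫ y, |y - t| * (if y - t ≤ 0 then (1:ℝ) else 0) ∂Q) = A t := by
    intro t
    rw [hA]
    congr 1; funext y; rw [ite_abs_eq_max, neg_sub]
  have hnum2 : ∀ t : ℝ, (∫ y, |t - y| * (if t - y ≤ 0 then (1:ℝ) else 0) ∂Q) = B t := by
    intro t
    rw [hB]
    congr 1; funext y; rw [ite_abs_eq_max, neg_sub]
  have hEfun : (fun t : ℝ => EDepth Q t)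
      = fun t => min (A t / (B t + A t)) (B t / (B t + A t)) := by
    funext t
    have h1 : eOut Q t 1 = A t / (B t + A t) := by
      show (∫ y, |⟪(1:ℝ), y - t⟫| * (if ⟪(1:ℝ), y - t⟫ ≤ 0 then (1:ℝ) else 0) ∂Q) /
        (∫ y, |⟪(1:ℝ), y - t⟫| ∂Q) = _
      have hi : ∀ y : ℝ, ⟪(1:ℝ), y - t⟫ = y - t := fun y => by simp [RCLike.inner_apply]
      simp only [hi]
      rw [hnum1 t, hD t]
    have h2 : eOut Q t (-1) = B t / (B t + A t) := by
      show (∫ y, |⟪(-1:ℝ), y - t⟫| * (if ⟪(-1:ℝ), y - t⟫ ≤ 0 then (1:ℝ) else 0) ∂Q) /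
        (∫ y, |⟪(-1:ℝ), y - t⟫| ∂Q) = _
      have hi : ∀ y : ℝ, ⟪(-1:ℝ), y - t⟫ = t - y := fun y => by simp [RCLike.inner_apply]
      simp only [hi]
      have habs : (∫ y, |t - y| ∂Q) = ∫ y, |y - t| ∂Q := by
        congr 1; funext y; rw [abs_sub_comm]
      rw [hnum2 t, habs, hD t]
    have hbdd : BddBelow (range fun u : {u : ℝ // ‖u‖ = 1} => eOut Q t u.1) := by
      refine ⟨0, ?_⟩
      rintro _ ⟨u, rfl⟩
      refine div_nonneg (integral_nonneg fun y => ?_) (integral_nonneg fun y => abs_nonneg _)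
      exact mul_nonneg (abs_nonneg _) (by split_ifs <;> norm_num)
    have hne : Nonempty {u : ℝ // ‖u‖ = 1} := ⟨⟨1, by norm_num⟩⟩
    refine le_antisymm (le_min ?_ ?_) ?_
    · exact (ciInf_le hbdd ⟨1, by norm_num⟩).trans_eq h1
    · exact (ciInf_le hbdd ⟨-1, by norm_num⟩).trans_eq h2
    · refine le_ciInf ?_
      rintro ⟨u, hu⟩
      rcases (abs_eq zero_le_one).mp (by rwa [Real.norm_eq_abs] at hu) with h | h
      · subst h; rw [h1]; exact min_le_left _ _
      · subst h; rw [h2]; exact min_le_right _ _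
  constructor
  · obtain ⟨LA, hA'⟩ := convexOn_exists_deriv_Iio hAconv z
    obtain ⟨LB, hB'⟩ := convexOn_exists_deriv_Iio hBconv z
    have hf := hA'.div (hB'.add hA') (hDpos z).ne'
    have hg := hB'.div (hB'.add hA') (hDpos z).ne'
    rw [hEfun]
    exact exists_min_deriv_Iio hf hg
  · obtain ⟨LA, hA'⟩ := convexOn_exists_deriv_Ioi hAconv z
    obtain ⟨LB, hB'⟩ := convexOn_exists_deriv_Ioi hBconv z
    have hf := hA'.div (hB'.add hA') (hDpos z).ne'
    have hg := hB'.div (hB'.add hA') (hDpos z).ne'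
    rw [hEfun]
    exact exists_min_deriv_Ioi hf hg

theorem stmt_16 {d : ℕ} (hd : 0 < d)
    (P : Measure (EuclideanSpace ℝ (Fin d))) [IsProbabilityMeasure P]
    (hmom : Integrable (fun y : EuclideanSpace ℝ (Fin d) => y) P)
    (hP1 : ∀ u : EuclideanSpace ℝ (Fin d), ‖u‖ = 1 → ∀ c : ℝ, P {z | ⟪u, z⟫ = c} < 1)
    (Q : Measure ℝ) [IsProbabilityMeasure Q]
    (hQmom : Integrable (fun y : ℝ => y) Q)
    (hQ1 : ∀ c : ℝ, Q {c} < 1) :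
    UniformContinuous (fun z => EDepth P z) ∧
    ∀ z : ℝ,
      (∃ L : ℝ, HasDerivWithinAt (fun t : ℝ => EDepth Q t) L (Set.Iio z) z) ∧
      (∃ L : ℝ, HasDerivWithinAt (fun t : ℝ => EDepth Q t) L (Set.Ioi z) z) :=
  ⟨partI hd P hmom hP1, fun z => partII Q hQmom hQ1 z⟩
end
end
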